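/- arXiv:1312.2606 — 4 statements merged into one kernel-verified Lean document; each statement's English description precedes it below -/
import Mathlib

section
/- For every s ≥ 1, the empirical Rademacher complexity of F_s satisfies R̂(F_s) = (2√R/(TN)) · E_σ[ ‖u‖_{s*} ], where u ∈ ℝ^T is the random vector with entries u_t = ‖Σ_{i=1}^N σ_t^i φ_t^i‖ (equivalently u_t = √(σ_t′ K_t σ_t), with K_t the Gram matrix whose (i,j) entry is ⟨φ_t^i, φ_t^j⟩ and σ_t = (σ_t^1,…,σ_t^N)′). -/
open scoped BigOperators
open RealInnerProductSpace

noncomputable section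

/-- The sign `+1`/`-1` associated with a Boolean, used to realize Rademacher variables. -/
def sgn (b : Bool) : ℝ := if b then 1 else -1

/-- Expectation over i.i.d. Rademacher variables `σ_t^i` (`t = 1,…,T`, `i = 1,…,N`),
realized as the uniform average over all sign patterns. -/
def Eσ (T N : ℕ) (f : (Fin T → Fin N → Bool) → ℝ) : ℝ :=
  (∑ σ : Fin T → Fin N → Bool, f σ) / (Fintype.card (Fin T → Fin N → Bool) : ℝ)

/-- The hypothesis class `F_s`: tuples `(w_1,…,w_T)` such that there is `λ ⪰ 0` with
`‖λ‖_s ≤ 1` and `‖w_t‖² ≤ λ_t² R` for all `t`. -/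
def Fs (H : Type*) [NormedAddCommGroup H] [InnerProductSpace ℝ H]
    (T : ℕ) (s R : ℝ) : Set (Fin T → H) :=
  {w | ∃ lam : Fin T → ℝ, (∀ t, 0 ≤ lam t) ∧ (∑ t, lam t ^ s) ≤ 1 ∧
    ∀ t, ‖w t‖ ^ 2 ≤ lam t ^ 2 * R}

/-- Empirical Rademacher complexity of a class `F ⊆ H^T` of weight tuples, with respect to
the sampled feature vectors `φ_t^i`. -/
def ERC {H : Type*} [NormedAddCommGroup H] [InnerProductSpace ℝ H]
    (T N : ℕ) (φ : Fin T → Fin N → H) (F : Set (Fin T → H)) : ℝ :=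
  Eσ T N (fun σ => sSup {v : ℝ | ∃ w ∈ F,
    v = (2 / ((T : ℝ) * N)) * ∑ t, ∑ i, sgn (σ t i) * ⟪w t, φ t i⟫})

/-- The `ℓ_q` norm on `ℝ^T` for finite `0 < q < ∞`. -/
def lqNorm {T : ℕ} (q : ℝ) (u : Fin T → ℝ) : ℝ := (∑ t, |u t| ^ q) ^ (1 / q)

/-- The `ℓ_{s*}` norm on `ℝ^T`, where `s* = s/(s-1)` is the Hölder conjugate of `s ≥ 1`;
for `s = 1` this is the `ℓ_∞` (maximum) norm. -/
def dualNorm {T : ℕ} (s : ℝ) (u : Fin T → ℝ) : ℝ :=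
  if s = 1 then ⨆ t, |u t| else lqNorm (s / (s - 1)) u

lemma dualNorm_upper {T : ℕ} (hT : 0 < T) {s : ℝ} (hs : 1 ≤ s)
    (u lam : Fin T → ℝ) (hu : ∀ t, 0 ≤ u t) (hlam : ∀ t, 0 ≤ lam t)
    (hsum : (∑ t, lam t ^ s) ≤ 1) :
    ∑ t, lam t * u t ≤ dualNorm s u := by
  haveI : Nonempty (Fin T) := Fin.pos_iff_nonempty.mp hT
  unfold dualNorm
  by_cases h1 : s = 1
  · rw [if_pos h1]
    have hM : ∀ t, u t ≤ ⨆ t, |u t| := fun t =>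
      (le_abs_self _).trans
        (le_ciSup (f := fun t => |u t|) (Set.Finite.bddAbove (Set.finite_range _)) t)
    have hMnn : 0 ≤ ⨆ t, |u t| := le_trans (hu (Classical.arbitrary _)) (hM _)
    calc ∑ t, lam t * u t ≤ ∑ t, lam t * (⨆ t, |u t|) :=
          Finset.sum_le_sum fun t _ => mul_le_mul_of_nonneg_left (hM t) (hlam t)
      _ = (∑ t, lam t) * (⨆ t, |u t|) := by rw [← Finset.sum_mul]
      _ ≤ 1 * (⨆ t, |u t|) := by
          refine mul_le_mul_of_nonneg_right ?_ hMnn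
          calc ∑ t, lam t = ∑ t, lam t ^ s := by
                refine Finset.sum_congr rfl fun t _ => ?_
                rw [h1, Real.rpow_one]
            _ ≤ 1 := hsum
      _ = _ := one_mul _
  · have hs1 : 1 < s := lt_of_le_of_ne hs (Ne.symm h1)
    have hpq : s.HolderConjugate (s / (s - 1)) := .conjExponent hs1
    rw [if_neg h1]
    calc ∑ t, lam t * u t
        ≤ (∑ t, lam t ^ s) ^ (1/s) * (∑ t, u t ^ (s/(s-1))) ^ (1/(s/(s-1))) :=
          Real.inner_le_Lp_mul_Lq_of_nonneg _ hpq (fun t _ => hlam t) (fun t _ => hu t)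
      _ ≤ 1 * lqNorm (s/(s-1)) u := by
          refine mul_le_mul ?_ ?_ ?_ zero_le_one
          · exact Real.rpow_le_one
              (Finset.sum_nonneg fun t _ => Real.rpow_nonneg (hlam t) _) hsum (by positivity)
          · unfold lqNorm
            refine le_of_eq ?_
            congr 1
            exact Finset.sum_congr rfl fun t _ => by rw [abs_of_nonneg (hu t)]
          · exact Real.rpow_nonneg
              (Finset.sum_nonneg fun t _ => Real.rpow_nonneg (hu t) _) _
      _ = _ := one_mul _

lemma isGreatest_key {H : Type*} [NormedAddCommGroup H] [InnerProductSpace ℝ H]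
    {T : ℕ} (hT : 0 < T) {R s : ℝ} (hR : 0 < R) (hs : 1 ≤ s) (v : Fin T → H) :
    IsGreatest {x : ℝ | ∃ w ∈ Fs H T s R, x = ∑ t, ⟪w t, v t⟫}
      (Real.sqrt R * dualNorm s (fun t => ‖v t‖)) := by
  haveI : Nonempty (Fin T) := Fin.pos_iff_nonempty.mp hT
  have hs0 : s ≠ 0 := by positivity
  set u : Fin T → ℝ := fun t => ‖v t‖ with hu_def
  have hu : ∀ t, 0 ≤ u t := fun t => norm_nonneg _
  constructor
  · -- membership: the sup is attained
    by_cases hzero : ∀ t, v t = 0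
    · refine ⟨0, ⟨0, fun t => le_refl 0, ?_, fun t => by simp⟩, ?_⟩
      · simp [Real.zero_rpow hs0]
      · have hu0 : ∀ t, u t = 0 := fun t => by simp [hu_def, hzero t]
        have hd : dualNorm s u = 0 := by
          unfold dualNorm lqNorm
          by_cases h1 : s = 1
          · simp [h1, hu0]
          · have hs1 : 1 < s := lt_of_le_of_ne hs (Ne.symm h1)
            have hq0 : s / (s - 1) ≠ 0 := ne_of_gt (div_pos (by linarith) (by linarith))
            have hq0' : 1 / (s / (s - 1)) ≠ 0 := one_div_ne_zero hq0
            rw [if_neg h1]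
            simp only [hu0, abs_zero, Real.zero_rpow hq0, Finset.sum_const, smul_zero]
            exact Real.zero_rpow hq0'
        simp [hd]
    · push_neg at hzero
      obtain ⟨t₁, ht₁⟩ := hzero
      have hu1 : 0 < u t₁ := norm_pos_iff.mpr ht₁
      by_cases h1 : s = 1
      · -- s = 1 : take the maximizing coordinate
        obtain ⟨t₀, -, ht₀⟩ := Finset.exists_max_image Finset.univ u ⟨t₁, Finset.mem_univ t₁⟩
        have hu0 : 0 < u t₀ := lt_of_lt_of_le hu1 (ht₀ t₁ (Finset.mem_univ t₁))
        have hdual : dualNorm s u = u t₀ := by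
          unfold dualNorm
          rw [if_pos h1]
          refine le_antisymm (ciSup_le fun t => ?_) ?_
          · rw [abs_of_nonneg (hu t)]; exact ht₀ t (Finset.mem_univ t)
          · exact (le_abs_self _).trans
              (le_ciSup (f := fun t => |u t|) (Set.Finite.bddAbove (Set.finite_range _)) t₀)
        have hnorm : ‖(Real.sqrt R / u t₀) • v t₀‖ = Real.sqrt R := by
          rw [norm_smul, Real.norm_eq_abs,
            abs_of_nonneg (div_nonneg (Real.sqrt_nonneg R) hu0.le)]
          exact div_mul_cancel₀ _ hu0.ne'
        refine ⟨fun t => if t = t₀ then (Real.sqrt R / u t₀) • v t₀ else 0,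
          ⟨fun t => if t = t₀ then 1 else 0, ?_, ?_, ?_⟩, ?_⟩
        · intro t; by_cases h : t = t₀ <;> simp [h]
        · have : (∑ t, (if t = t₀ then (1:ℝ) else 0) ^ s) = 1 := by
            rw [Finset.sum_eq_single t₀]
            · simp
            · intro b _ hb; simp [hb, Real.zero_rpow hs0]
            · intro h; exact absurd (Finset.mem_univ t₀) h
          rw [this]
        · intro t
          beta_reduce
          by_cases h : t = t₀
          · subst h
            rw [if_pos rfl, if_pos rfl, hnorm, Real.sq_sqrt hR.le, one_pow, one_mul]
          · simp [h]
        · rw [hdual, Finset.sum_eq_single t₀]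
          · beta_reduce
            rw [if_pos rfl, real_inner_smul_left, real_inner_self_eq_norm_sq]
            have huv : ‖v t₀‖ = u t₀ := rfl
            rw [huv]
            field_simp
          · intro b _ hb; simp [hb]
          · intro h; exact absurd (Finset.mem_univ t₀) h
      · -- s > 1
        have hs1 : 1 < s := lt_of_le_of_ne hs (Ne.symm h1)
        have hpq : s.HolderConjugate (s / (s - 1)) := .conjExponent hs1
        set q : ℝ := s / (s - 1) with hq_def
        have hq1 : 1 < q := hpq.symm.lt
        have hq0 : (0:ℝ) < q := hpq.symm.pos
        have hqm1 : 0 < q - 1 := by linarith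
        set S : ℝ := ∑ t, u t ^ q with hS_def
        have hS : 0 < S := by
          refine Finset.sum_pos' (fun t _ => Real.rpow_nonneg (hu t) _)
            ⟨t₁, Finset.mem_univ t₁, Real.rpow_pos_of_pos hu1 q⟩
        set M : ℝ := S ^ (1/q) with hM_def
        have hM : 0 < M := Real.rpow_pos_of_pos hS _
        have hMq : M ^ q = S := by
          rw [hM_def, ← Real.rpow_mul hS.le, one_div, inv_mul_cancel₀ hq0.ne',
            Real.rpow_one]
        have hqs : (q - 1) * s = q := by
          rw [hq_def]
          have h : s - 1 ≠ 0 := by linarith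
          field_simp
          ring
        set lam : Fin T → ℝ := fun t => (u t / M) ^ (q - 1) with hlam_def
        have hlam0 : ∀ t, 0 ≤ lam t :=
          fun t => Real.rpow_nonneg (div_nonneg (hu t) hM.le) _
        have hdual : dualNorm s u = M := by
          unfold dualNorm lqNorm
          rw [if_neg h1, ← hq_def, hM_def, hS_def]
          congr 1
          exact Finset.sum_congr rfl fun t _ => by rw [abs_of_nonneg (hu t)]
        have hsumlam : ∑ t, lam t * u t = M := by
          have ht : ∀ t, lam t * u t = u t ^ q / M ^ (q-1) := by
            intro t
            simp only [hlam_def]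
            rw [Real.div_rpow (hu t) hM.le]
            by_cases hut : u t = 0
            · rw [hut, Real.zero_rpow hqm1.ne', Real.zero_rpow hq0.ne']
              simp
            · rw [div_mul_eq_mul_div]
              congr 1
              rw [← Real.rpow_add_one hut, sub_add_cancel]
          rw [Finset.sum_congr rfl fun t _ => ht t, ← Finset.sum_div, ← hS_def,
            ← hMq, ← Real.rpow_sub hM]
          norm_num
        refine ⟨fun t => ((lam t * Real.sqrt R) / u t) • v t, ⟨lam, hlam0, ?_, ?_⟩, ?_⟩
        · have hls : ∀ t, lam t ^ s = u t ^ q / M ^ q := by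
            intro t
            simp only [hlam_def]
            rw [← Real.rpow_mul (div_nonneg (hu t) hM.le), hqs,
              Real.div_rpow (hu t) hM.le]
          rw [Finset.sum_congr rfl fun t _ => hls t, ← Finset.sum_div, ← hS_def, hMq,
            div_self hS.ne']
        · intro t
          beta_reduce
          by_cases hvt : v t = 0
          · have : u t = 0 := by simp [hu_def, hvt]
            simp only [hvt, smul_zero, norm_zero]
            have h0 : ((0:ℝ)) ^ 2 = 0 := by norm_num
            rw [h0]
            positivity
          · have hut : 0 < u t := norm_pos_iff.mpr hvt
            have hn : ‖((lam t * Real.sqrt R) / u t) • v t‖ = lam t * Real.sqrt R := by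
              rw [norm_smul, Real.norm_eq_abs,
                abs_of_nonneg (div_nonneg (mul_nonneg (hlam0 t) (Real.sqrt_nonneg R)) hut.le)]
              exact div_mul_cancel₀ _ hut.ne'
            rw [hn, mul_pow, Real.sq_sqrt hR.le]
        · have hterm : ∀ t, ⟪((lam t * Real.sqrt R) / u t) • v t, v t⟫ =
              Real.sqrt R * (lam t * u t) := by
            intro t
            by_cases hvt : v t = 0
            · have h0 : u t = 0 := by simp [hu_def, hvt]
              simp [hvt, h0]
            · have hut : 0 < u t := norm_pos_iff.mpr hvt
              rw [real_inner_smul_left, real_inner_self_eq_norm_sq]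
              have huv : ‖v t‖ = u t := rfl
              rw [huv]
              field_simp
          rw [hdual]
          rw [Finset.sum_congr rfl fun t _ => hterm t, ← Finset.mul_sum, hsumlam]
  · rintro x ⟨w, ⟨lam, hlam0, hlams, hlamw⟩, rfl⟩
    have hw : ∀ t, ‖w t‖ ≤ lam t * Real.sqrt R := by
      intro t
      have h2 : ‖w t‖ ^ 2 ≤ (lam t * Real.sqrt R) ^ 2 := by
        rw [mul_pow, Real.sq_sqrt hR.le]; exact hlamw t
      calc ‖w t‖ = Real.sqrt (‖w t‖ ^ 2) := (Real.sqrt_sq (norm_nonneg _)).symm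
        _ ≤ Real.sqrt ((lam t * Real.sqrt R) ^ 2) := Real.sqrt_le_sqrt h2
        _ = lam t * Real.sqrt R :=
            Real.sqrt_sq (mul_nonneg (hlam0 t) (Real.sqrt_nonneg R))
    calc ∑ t, ⟪w t, v t⟫ ≤ ∑ t, (lam t * Real.sqrt R) * u t := by
          refine Finset.sum_le_sum fun t _ => ?_
          exact (real_inner_le_norm _ _).trans
            (mul_le_mul_of_nonneg_right (hw t) (hu t))
      _ = Real.sqrt R * ∑ t, lam t * u t := by
          rw [Finset.mul_sum]; exact Finset.sum_congr rfl fun t _ => by ring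
      _ ≤ Real.sqrt R * dualNorm s u :=
          mul_le_mul_of_nonneg_left
            (dualNorm_upper hT hs u lam hu hlam0 hlams) (Real.sqrt_nonneg R)

/-- For every `s ≥ 1`,
`R̂(F_s) = (2√R/(TN)) · E_σ ‖u‖_{s*}` with `u_t = ‖Σ_i σ_t^i φ_t^i‖`. -/
theorem erc_Fs_eq {H : Type*} [NormedAddCommGroup H] [InnerProductSpace ℝ H]
    (T N : ℕ) (hT : 0 < T) (hN : 0 < N) (R : ℝ) (hR : 0 < R)
    (φ : Fin T → Fin N → H) (s : ℝ) (hs : 1 ≤ s) :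
    ERC T N φ (Fs H T s R) =
      (2 * Real.sqrt R / ((T : ℝ) * N)) *
        Eσ T N (fun σ => dualNorm s (fun t => ‖∑ i, sgn (σ t i) • φ t i‖)) := by
  have hc : (0:ℝ) ≤ 2 / ((T : ℝ) * N) := by positivity
  have key : ∀ σ : Fin T → Fin N → Bool,
      sSup {x : ℝ | ∃ w ∈ Fs H T s R,
        x = (2 / ((T : ℝ) * N)) * ∑ t, ∑ i, sgn (σ t i) * ⟪w t, φ t i⟫} =
      (2 / ((T : ℝ) * N)) *
        (Real.sqrt R * dualNorm s (fun t => ‖∑ i, sgn (σ t i) • φ t i‖)) := by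
    intro σ
    set v : Fin T → H := fun t => ∑ i, sgn (σ t i) • φ t i with hv
    have hinner : ∀ (w : Fin T → H) (t : Fin T),
        (∑ i, sgn (σ t i) * ⟪w t, φ t i⟫) = ⟪w t, v t⟫ := by
      intro w t
      simp only [hv, inner_sum, real_inner_smul_right]
    have hG := isGreatest_key (H := H) hT hR hs v
    refine IsGreatest.csSup_eq ⟨?_, ?_⟩
    · obtain ⟨w, hw, hval⟩ := hG.1
      refine ⟨w, hw, ?_⟩
      rw [hval]
      congr 1
      exact Finset.sum_congr rfl fun t _ => (hinner w t).symm
    · rintro x ⟨w, hw, rfl⟩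
      have hx : (∑ t, ∑ i, sgn (σ t i) * ⟪w t, φ t i⟫) = ∑ t, ⟪w t, v t⟫ :=
        Finset.sum_congr rfl fun t _ => hinner w t
      rw [hx]
      exact mul_le_mul_of_nonneg_left (hG.2 ⟨w, hw, rfl⟩) hc
  unfold ERC Eσ
  simp only [key]
  rw [← Finset.mul_sum, ← Finset.mul_sum]
  have hcard : (0:ℝ) < (Fintype.card (Fin T → Fin N → Bool) : ℝ) := by
    exact_mod_cast Fintype.card_pos
  field_simp


end
end

section
/- For every s > 1 (so that s* = s/(s−1) is finite), R̂(F_s) ≤ (2/(TN)) · √( R · s* · ( Σ_{t=1}^T ( Σ_{i=1}^N ‖φ_t^i‖² )^{s*/2} )^{2/s*} ); equivalently, R̂(F_s) ≤ (2/(TN)) √( R s* ‖(tr K_1, …, tr K_T)‖_{s*/2} ), where tr K_t = Σ_{i=1}^N ‖φ_t^i‖². -/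
open scoped BigOperators
open RealInnerProductSpace

noncomputable section

open Finset


def df : ℕ → ℕ
  | 0 => 1
  | r + 1 => (2 * r + 1) * df r

lemma df_pos (r : ℕ) : 0 < df r := by
  induction r with
  | zero => simp [df]
  | succ r ih => exact Nat.mul_pos (by omega) ih

lemma df_mul_id (r : ℕ) : df r * (2 ^ r * r.factorial) = (2 * r).factorial := by
  induction r with
  | zero => simp [df]
  | succ r ih =>
    have h2 : 2 * (r + 1) = 2 * r + 1 + 1 := by omega
    rw [h2, Nat.factorial_succ, Nat.factorial_succ]
    rw [df, Nat.factorial_succ, pow_succ]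
    rw [← ih]
    ring

lemma two_pow_mul_factorial_le (m : ℕ) : 2 ^ m * m.factorial ≤ (2 * m).factorial := by
  calc 2 ^ m * m.factorial = 1 * (2 ^ m * m.factorial) := (one_mul _).symm
    _ ≤ df m * (2 ^ m * m.factorial) :=
        Nat.mul_le_mul_right _ (df_pos m)
    _ = (2 * m).factorial := df_mul_id m

lemma choose_df_le {r j : ℕ} (h : j ≤ r) :
    (2 * r).choose (2 * j) * df j ≤ df r * r.choose j := by
  set m := r - j with hm
  have hjm : j + m = r := by omega
  have hK : 0 < 2 ^ j * j.factorial * (2 ^ m * m.factorial) := by positivity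
  apply Nat.le_of_mul_le_mul_right _ hK
  have hle : 2 * j ≤ 2 * r := by omega
  have hsub : 2 * r - 2 * j = 2 * m := by omega
  calc (2 * r).choose (2 * j) * df j * (2 ^ j * j.factorial * (2 ^ m * m.factorial))
      = (2 * r).choose (2 * j) * (df j * (2 ^ j * j.factorial)) * (2 ^ m * m.factorial) := by ring
    _ = (2 * r).choose (2 * j) * (2 * j).factorial * (2 ^ m * m.factorial) := by
        rw [df_mul_id]
    _ ≤ (2 * r).choose (2 * j) * (2 * j).factorial * (2 * m).factorial :=
        Nat.mul_le_mul_left _ (two_pow_mul_factorial_le m)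
    _ = (2 * r).factorial := by
        rw [← hsub]; exact Nat.choose_mul_factorial_mul_factorial hle
    _ = df r * (2 ^ r * r.factorial) := (df_mul_id r).symm
    _ = df r * (2 ^ r * (r.choose j * j.factorial * m.factorial)) := by
        have hcf : r.choose j * j.factorial * m.factorial = r.factorial := by
          rw [hm]; exact Nat.choose_mul_factorial_mul_factorial h
        rw [hcf]
    _ = df r * r.choose j * (2 ^ j * j.factorial * (2 ^ m * m.factorial)) := by
        have hp : (2:ℕ) ^ j * 2 ^ m = 2 ^ r := by rw [← pow_add, hjm]
        rw [← hp]; ring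

lemma key_ident (x y : ℝ) (r : ℕ) :
    (x + y) ^ (2 * r) + (x - y) ^ (2 * r)
      = 2 * ∑ j ∈ range (r + 1),
          ((2 * r).choose (2 * j) : ℝ) * (x ^ (2 * j) * y ^ (2 * (r - j))) := by
  have h1 : (x + y) ^ (2 * r)
      = ∑ k ∈ range (2 * r + 1), x ^ k * y ^ (2 * r - k) * ((2 * r).choose k : ℝ) :=
    add_pow x y (2 * r)
  have h2 : (x - y) ^ (2 * r)
      = ∑ k ∈ range (2 * r + 1), x ^ k * (-y) ^ (2 * r - k) * ((2 * r).choose k : ℝ) := by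
    rw [sub_eq_add_neg]; exact add_pow x (-y) (2 * r)
  set g : ℕ → ℝ := fun k => x ^ k * (y ^ (2 * r - k) + (-y) ^ (2 * r - k)) * ((2 * r).choose k : ℝ)
    with hg
  have hsum : (x + y) ^ (2 * r) + (x - y) ^ (2 * r) = ∑ k ∈ range (2 * r + 1), g k := by
    rw [h1, h2, ← Finset.sum_add_distrib]
    exact Finset.sum_congr rfl fun k _ => by simp only [hg]; ring
  rw [hsum]
  have hodd : ∀ k ∈ range (2 * r + 1), g k ≠ 0 → Even k := by
    intro k hk hne
    by_contra hkodd
    apply hne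
    have hk' : k ≤ 2 * r := by simpa [Nat.lt_succ_iff] using hk
    have hko : Odd k := Nat.not_even_iff_odd.mp hkodd
    have hodd2 : Odd (2 * r - k) := Nat.Even.sub_odd hk' (even_two_mul r) hko
    rw [hg]
    simp only
    rw [hodd2.neg_pow]
    ring
  rw [← Finset.sum_filter_of_ne hodd]
  rw [Finset.mul_sum]
  refine Finset.sum_nbij' (fun k => k / 2) (fun j => 2 * j) ?_ ?_ ?_ ?_ ?_
  · intro k hk
    simp only [Finset.mem_filter, Finset.mem_range] at hk ⊢
    omega
  · intro j hj
    simp only [Finset.mem_filter, Finset.mem_range] at hj ⊢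
    exact ⟨by omega, even_two_mul j⟩
  · intro k hk
    simp only [Finset.mem_filter, Finset.mem_range] at hk
    rcases hk.2 with ⟨m, hm⟩
    show 2 * (k / 2) = k
    omega
  · intro j hj
    show 2 * j / 2 = j
    omega
  · intro k hk
    simp only [Finset.mem_filter, Finset.mem_range] at hk
    rcases hk.2 with ⟨m, hm⟩
    show g k = 2 * (((2 * r).choose (2 * (k / 2)) : ℝ) * (x ^ (2 * (k / 2)) * y ^ (2 * (r - k / 2))))
    have h2m : 2 * (k / 2) = k := by omega
    have hsube : 2 * (r - k / 2) = 2 * r - k := by omega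
    have heve : Even (2 * r - k) := by rw [← hsube]; exact even_two_mul _
    rw [h2m, hsube, hg]
    simp only
    rw [heve.neg_pow]
    ring



lemma sgn_sq (b : Bool) : sgn b ^ 2 = 1 := by cases b <;> simp [sgn]

lemma khintchine_scalar {ι : Type*} [Fintype ι] [DecidableEq ι] (c : ι → ℝ)
    (s : Finset ι) (r : ℕ) :
    ∑ b : ι → Bool, (∑ i ∈ s, sgn (b i) * c i) ^ (2 * r)
      ≤ 2 ^ (Fintype.card ι) * df r * (∑ i ∈ s, c i ^ 2) ^ r := by
  induction s using Finset.induction_on generalizing r with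
  | empty =>
    simp only [Finset.sum_empty]
    cases r with
    | zero =>
      simp [df, Fintype.card_fun]
    | succ r =>
      rw [zero_pow (by omega), zero_pow (by omega)]
      simp
  | @insert a s ha ih =>
    set A : (ι → Bool) → ℝ := fun b => ∑ i ∈ s, sgn (b i) * c i with hA
    set flipa : (ι → Bool) → (ι → Bool) := fun b => Function.update b a (!(b a)) with hflipa
    have hinv : Function.Involutive flipa := by
      intro b
      funext i
      rcases eq_or_ne i a with hi | hi
      · subst hi; simp [hflipa]
      · simp [hflipa, Function.update_of_ne hi]
    set e := hinv.toPerm flipa with he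
    set F : (ι → Bool) → ℝ := fun b => (∑ i ∈ insert a s, sgn (b i) * c i) ^ (2 * r) with hF
    have hebi : ∀ (b : ι → Bool) (i : ι), i ∈ s → sgn (e b i) = sgn (b i) := by
      intro b i hi
      have hne : i ≠ a := ne_of_mem_of_not_mem hi ha
      have : e b i = b i := Function.update_of_ne hne _ b
      rw [this]
    have heba : ∀ b : ι → Bool, sgn (e b a) = - sgn (b a) := by
      intro b
      have : e b a = !(b a) := Function.update_self a _ b
      rw [this]; cases b a <;> simp [sgn]
    have key2 : ∀ b : ι → Bool,
        F b + F (e b) = 2 * ∑ j ∈ range (r + 1),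
          ((2 * r).choose (2 * j) : ℝ) * ((c a ^ 2) ^ (r - j) * A b ^ (2 * j)) := by
      intro b
      have hFb : F b = (A b + sgn (b a) * c a) ^ (2 * r) := by
        rw [hF]; simp only [Finset.sum_insert ha]; rw [add_comm]
      have hFe : F (e b) = (A b - sgn (b a) * c a) ^ (2 * r) := by
        rw [hF]
        simp only [Finset.sum_insert ha]
        rw [heba b]
        have hAe : ∑ i ∈ s, sgn (e b i) * c i = A b :=
          Finset.sum_congr rfl fun i hi => by rw [hebi b i hi]
        rw [hAe]
        ring_nf
      rw [hFb, hFe, key_ident]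
      congr 1
      refine Finset.sum_congr rfl fun j _ => ?_
      have hsp : (sgn (b a) * c a) ^ (2 * (r - j)) = (c a ^ 2) ^ (r - j) := by
        rw [pow_mul, mul_pow, sgn_sq, one_mul]
      rw [hsp]; ring
    have hmain : ∑ b : ι → Bool, F b
        = ∑ j ∈ range (r + 1), ((2 * r).choose (2 * j) : ℝ) *
            ((c a ^ 2) ^ (r - j) * ∑ b : ι → Bool, A b ^ (2 * j)) := by
      have h1 : (2:ℝ) * ∑ b : ι → Bool, F b = ∑ b : ι → Bool, (F b + F (e b)) := by
        rw [Finset.sum_add_distrib, Equiv.sum_comp e F]; ring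
      have h2 : ∑ b : ι → Bool, (F b + F (e b))
          = 2 * ∑ j ∈ range (r + 1), ((2 * r).choose (2 * j) : ℝ) *
              ((c a ^ 2) ^ (r - j) * ∑ b : ι → Bool, A b ^ (2 * j)) := by
        rw [Finset.sum_congr rfl fun b _ => key2 b, ← Finset.mul_sum, Finset.sum_comm]
        congr 1
        refine Finset.sum_congr rfl fun j _ => ?_
        simp only [Finset.mul_sum]
      have := h1.trans h2
      exact mul_left_cancel₀ (two_ne_zero) this
    rw [hmain]
    set S : ℝ := ∑ i ∈ s, c i ^ 2 with hS
    have hSnn : 0 ≤ S := Finset.sum_nonneg fun i _ => sq_nonneg _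
    have hstep : ∀ j ∈ range (r + 1),
        ((2 * r).choose (2 * j) : ℝ) * ((c a ^ 2) ^ (r - j) * ∑ b : ι → Bool, A b ^ (2 * j))
          ≤ (2 ^ (Fintype.card ι) : ℝ) * ((df r : ℝ) * ((r.choose j : ℝ) * (S ^ j * (c a ^ 2) ^ (r - j)))) := by
      intro j hj
      have hjr : j ≤ r := by simp [Finset.mem_range] at hj; omega
      have hsb : ∑ b : ι → Bool, A b ^ (2 * j) ≤ 2 ^ (Fintype.card ι) * df j * S ^ j := ih j
      calc ((2 * r).choose (2 * j) : ℝ) * ((c a ^ 2) ^ (r - j) * ∑ b : ι → Bool, A b ^ (2 * j))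
          ≤ ((2 * r).choose (2 * j) : ℝ) * ((c a ^ 2) ^ (r - j) * (2 ^ (Fintype.card ι) * df j * S ^ j)) := by
            apply mul_le_mul_of_nonneg_left _ (by positivity)
            apply mul_le_mul_of_nonneg_left hsb (by positivity)
        _ = (2 ^ (Fintype.card ι) : ℝ) * (((2 * r).choose (2 * j) * df j : ℕ) : ℝ) * (S ^ j * (c a ^ 2) ^ (r - j)) := by
            push_cast; ring
        _ ≤ (2 ^ (Fintype.card ι) : ℝ) * ((df r * r.choose j : ℕ) : ℝ) * (S ^ j * (c a ^ 2) ^ (r - j)) := by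
            apply mul_le_mul_of_nonneg_right _ (by positivity)
            apply mul_le_mul_of_nonneg_left _ (by positivity)
            exact_mod_cast choose_df_le hjr
        _ = (2 ^ (Fintype.card ι) : ℝ) * ((df r : ℝ) * ((r.choose j : ℝ) * (S ^ j * (c a ^ 2) ^ (r - j)))) := by
            push_cast; ring
    calc ∑ j ∈ range (r + 1), ((2 * r).choose (2 * j) : ℝ) *
            ((c a ^ 2) ^ (r - j) * ∑ b : ι → Bool, A b ^ (2 * j))
        ≤ ∑ j ∈ range (r + 1), (2 ^ (Fintype.card ι) : ℝ) *
            ((df r : ℝ) * ((r.choose j : ℝ) * (S ^ j * (c a ^ 2) ^ (r - j)))) :=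
          Finset.sum_le_sum hstep
      _ = (2 ^ (Fintype.card ι) : ℝ) * (df r : ℝ) *
            ∑ j ∈ range (r + 1), S ^ j * (c a ^ 2) ^ (r - j) * (r.choose j : ℝ) := by
          simp only [Finset.mul_sum]
          exact Finset.sum_congr rfl fun j _ => by ring
      _ = (2 ^ (Fintype.card ι) : ℝ) * (df r : ℝ) * (S + c a ^ 2) ^ r := by
          rw [add_pow]
      _ = 2 ^ (Fintype.card ι) * df r * (∑ i ∈ insert a s, c i ^ 2) ^ r := by
          rw [Finset.sum_insert ha, add_comm]

open RealInnerProductSpace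


lemma sum_sgn_pow_nonneg (m : ℕ) : (0:ℝ) ≤ ∑ x : Bool, sgn x ^ m := by
  rw [Fintype.sum_bool, show sgn true = 1 from rfl, show sgn false = -1 from rfl, one_pow]
  rcases Nat.even_or_odd m with hm | hm
  · rw [hm.neg_one_pow]; norm_num
  · rw [hm.neg_one_pow]; norm_num

lemma prod_sgn_nonneg {ι : Type*} [Fintype ι] [DecidableEq ι] {r : ℕ} (f : Fin r → ι × ι) :
    (0:ℝ) ≤ ∑ b : ι → Bool, ∏ k, sgn (b (f k).1) * sgn (b (f k).2) := by
  have half : ∀ (b : ι → Bool) (p : ι),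
      ∏ i : ι, sgn (b i) ^ (if p = i then 1 else 0) = sgn (b p) := by
    intro b p
    rw [Finset.prod_congr rfl (fun i _ => pow_boole (p = i) (sgn (b i)))]
    simp [Finset.prod_ite_eq]
  have hrw : ∀ b : ι → Bool,
      (∏ k, sgn (b (f k).1) * sgn (b (f k).2))
        = ∏ i : ι, sgn (b i)
            ^ (∑ k, ((if (f k).1 = i then 1 else 0) + (if (f k).2 = i then 1 else 0))) := by
    intro b
    have h1 : ∀ k : Fin r, sgn (b (f k).1) * sgn (b (f k).2)
        = ∏ i : ι, sgn (b i) ^ ((if (f k).1 = i then 1 else 0) + (if (f k).2 = i then 1 else 0)) := by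
      intro k
      simp only [pow_add]
      rw [Finset.prod_mul_distrib, half b (f k).1, half b (f k).2]
    rw [Finset.prod_congr rfl (fun k _ => h1 k), Finset.prod_comm]
    exact Finset.prod_congr rfl fun i _ => (Finset.prod_pow_eq_pow_sum _ _ _)
  calc (0:ℝ) ≤ ∏ i : ι, ∑ x : Bool, sgn x
        ^ (∑ k, ((if (f k).1 = i then 1 else 0) + (if (f k).2 = i then 1 else 0))) :=
        Finset.prod_nonneg fun i _ => sum_sgn_pow_nonneg _
    _ = ∑ b ∈ Fintype.piFinset (fun _ : ι => (Finset.univ : Finset Bool)), ∏ i : ι, sgn (b i)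
        ^ (∑ k, ((if (f k).1 = i then 1 else 0) + (if (f k).2 = i then 1 else 0))) :=
        Finset.prod_univ_sum _ _
    _ = ∑ b : ι → Bool, ∏ k, sgn (b (f k).1) * sgn (b (f k).2) := by
        rw [Fintype.piFinset_univ]
        exact Finset.sum_congr rfl fun b _ => (hrw b).symm

lemma sum_pow_expand {ι : Type*} [Fintype ι] [DecidableEq ι] (r : ℕ)
    (G : ι × ι → ℝ) :
    ∑ b : ι → Bool, (∑ p : ι × ι, (sgn (b p.1) * sgn (b p.2)) * G p) ^ r
      = ∑ f ∈ Fintype.piFinset (fun _ : Fin r => (Finset.univ : Finset (ι × ι))),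
          (∏ k, G (f k)) * (∑ b : ι → Bool, ∏ k, sgn (b (f k).1) * sgn (b (f k).2)) := by
  have h1 : ∀ b : ι → Bool, (∑ p : ι × ι, (sgn (b p.1) * sgn (b p.2)) * G p) ^ r
      = ∑ f ∈ Fintype.piFinset (fun _ : Fin r => (Finset.univ : Finset (ι × ι))),
          ∏ k, (sgn (b (f k).1) * sgn (b (f k).2)) * G (f k) :=
    fun b => Finset.sum_pow' _ _ _
  rw [Finset.sum_congr rfl fun b _ => h1 b, Finset.sum_comm]
  refine Finset.sum_congr rfl fun f _ => ?_
  rw [Finset.mul_sum]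
  refine Finset.sum_congr rfl fun b _ => ?_
  rw [Finset.prod_mul_distrib]
  ring

lemma hilbert_to_scalar {H : Type*} [NormedAddCommGroup H] [InnerProductSpace ℝ H]
    {ι : Type*} [Fintype ι] [DecidableEq ι] (φ : ι → H) (r : ℕ) :
    ∑ b : ι → Bool, ‖∑ i, sgn (b i) • φ i‖ ^ (2 * r)
      ≤ ∑ b : ι → Bool, (∑ i, sgn (b i) * ‖φ i‖) ^ (2 * r) := by
  have hnorm : ∀ b : ι → Bool, ‖∑ i, sgn (b i) • φ i‖ ^ (2 * r)
      = (∑ p : ι × ι, (sgn (b p.1) * sgn (b p.2)) * ⟪φ p.1, φ p.2⟫) ^ r := by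
    intro b
    rw [pow_mul]
    congr 1
    rw [← real_inner_self_eq_norm_sq, sum_inner, Fintype.sum_prod_type]
    refine Finset.sum_congr rfl fun i _ => ?_
    rw [inner_sum]
    refine Finset.sum_congr rfl fun j _ => ?_
    rw [real_inner_smul_left, real_inner_smul_right]
    ring
  have hscal : ∀ b : ι → Bool, (∑ i, sgn (b i) * ‖φ i‖) ^ (2 * r)
      = (∑ p : ι × ι, (sgn (b p.1) * sgn (b p.2)) * (‖φ p.1‖ * ‖φ p.2‖)) ^ r := by
    intro b
    rw [pow_mul]
    congr 1
    rw [sq, Finset.sum_mul_sum, Fintype.sum_prod_type]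
    refine Finset.sum_congr rfl fun i _ => ?_
    refine Finset.sum_congr rfl fun j _ => ?_
    ring
  rw [Finset.sum_congr rfl fun b _ => hnorm b, Finset.sum_congr rfl fun b _ => hscal b,
    sum_pow_expand, sum_pow_expand]
  refine Finset.sum_le_sum fun f _ => ?_
  refine mul_le_mul_of_nonneg_right ?_ (prod_sgn_nonneg f)
  calc ∏ k, ⟪φ (f k).1, φ (f k).2⟫ ≤ |∏ k, ⟪φ (f k).1, φ (f k).2⟫| := le_abs_self _
    _ = ∏ k, |⟪φ (f k).1, φ (f k).2⟫| := Finset.abs_prod _ _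
    _ ≤ ∏ k, ‖φ (f k).1‖ * ‖φ (f k).2‖ :=
        Finset.prod_le_prod (fun k _ => abs_nonneg _) (fun k _ => abs_real_inner_le_norm _ _)


lemma dfle2 : ∀ r : ℕ, 2 ≤ r → (df r : ℝ) ≤ (2 * (r:ℝ) - 2) ^ r := by
  intro r
  induction r with
  | zero => intro h; omega
  | succ r ih =>
    intro h
    rcases Nat.lt_or_ge r 2 with hr | hr
    · interval_cases r
      · omega
      · norm_num [df]
    · have ihr := ih hr
      have hrR : (2:ℝ) ≤ (r:ℝ) := by exact_mod_cast hr
      have hpos : (0:ℝ) < 2 * (r:ℝ) - 2 := by linarith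
      have hd0 : (0:ℝ) ≤ 2 / (2 * (r:ℝ) - 2) := by positivity
      have hbern : (1:ℝ) + (r:ℝ) * (2 / (2 * (r:ℝ) - 2)) ≤ (1 + 2 / (2 * (r:ℝ) - 2)) ^ r :=
        one_add_mul_le_pow (by linarith) r
      have h2 : (2:ℝ) ≤ (1 + 2 / (2 * (r:ℝ) - 2)) ^ r := by
        have : (1:ℝ) ≤ (r:ℝ) * (2 / (2 * (r:ℝ) - 2)) := by
          rw [mul_div_assoc']
          rw [le_div_iff₀ hpos]
          linarith
        linarith
      have h3 : (1:ℝ) + 2 / (2 * (r:ℝ) - 2) = (2 * (r:ℝ)) / (2 * (r:ℝ) - 2) := by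
        rw [eq_div_iff hpos.ne', add_mul, div_mul_cancel₀ _ hpos.ne']; ring
      rw [h3, div_pow] at h2
      have hdp : (0:ℝ) < (2 * (r:ℝ) - 2) ^ r := by positivity
      rw [le_div_iff₀ hdp] at h2
      have hstep : (2 * ((r:ℕ):ℝ) + 1) * (2 * (r:ℝ) - 2) ^ r ≤ (2 * (r:ℝ)) ^ (r + 1) := by
        have h4r : (2 * (r:ℝ) + 1) ≤ 4 * (r:ℝ) := by linarith
        calc (2 * ((r:ℕ):ℝ) + 1) * (2 * (r:ℝ) - 2) ^ r
            ≤ 4 * (r:ℝ) * (2 * (r:ℝ) - 2) ^ r := by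
              apply mul_le_mul_of_nonneg_right h4r hdp.le
          _ ≤ 2 * (r:ℝ) * (2 * ((2 * (r:ℝ) - 2) ^ r)) := by ring_nf; linarith [le_refl (0:ℝ)]
          _ ≤ 2 * (r:ℝ) * (2 * (r:ℝ)) ^ r := by
              apply mul_le_mul_of_nonneg_left h2 (by positivity)
          _ = (2 * (r:ℝ)) ^ (r + 1) := by rw [pow_succ]; ring
      have hcast : (df (r+1) : ℝ) = (2 * (r:ℕ) + 1 : ℕ) * (df r : ℝ) := by
        rw [df]; push_cast; ring
      have hfin : (df (r+1) : ℝ) ≤ (2 * (r:ℝ)) ^ (r+1) := by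
        rw [hcast]
        calc ((2 * (r:ℕ) + 1 : ℕ) : ℝ) * (df r : ℝ)
            ≤ ((2 * (r:ℕ) + 1 : ℕ) : ℝ) * (2 * (r:ℝ) - 2) ^ r := by
              apply mul_le_mul_of_nonneg_left ihr (by positivity)
          _ ≤ (2 * (r:ℝ)) ^ (r + 1) := by push_cast at hstep ⊢; exact hstep
      have : (2 * ((r:ℕ):ℝ) + 2 - 2) = 2 * (r:ℝ) := by ring
      calc (df (r+1) : ℝ) ≤ (2 * (r:ℝ)) ^ (r+1) := hfin
        _ = (2 * ((r+1:ℕ):ℝ) - 2) ^ (r+1) := by push_cast; ring_nf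

lemma df_le_rpow_base {r : ℕ} {q : ℝ} (hq : 1 < q) (hr1 : 1 ≤ r)
    (h2r2 : 2 * (r:ℝ) - 2 ≤ q) : (df r : ℝ) ≤ q ^ r := by
  rcases Nat.lt_or_ge r 2 with hr | hr
  · have : r = 1 := by omega
    subst this
    simpa [df] using hq.le
  · calc (df r : ℝ) ≤ (2 * (r:ℝ) - 2) ^ r := dfle2 r hr
      _ ≤ q ^ r := by
        apply pow_le_pow_left₀ _ h2r2
        have : (2:ℝ) ≤ (r:ℝ) := by exact_mod_cast hr
        linarith

lemma moment_bound {H : Type*} [NormedAddCommGroup H] [InnerProductSpace ℝ H]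
    {ι : Type*} [Fintype ι] [DecidableEq ι] (φ : ι → H) {q : ℝ} (hq : 1 < q) :
    ∑ b : ι → Bool, ‖∑ i, sgn (b i) • φ i‖ ^ q
      ≤ 2 ^ (Fintype.card ι) * (q * ∑ i, ‖φ i‖ ^ 2) ^ (q / 2) := by
  classical
  set r : ℕ := ⌈q / 2⌉₊ with hrdef
  have hq0 : 0 < q := by linarith
  have hr1 : 1 ≤ r := Nat.one_le_iff_ne_zero.mpr (by
    simp only [hrdef, ne_eq, Nat.ceil_eq_zero, not_le]
    positivity)
  have hrR : (1:ℝ) ≤ (r:ℝ) := by exact_mod_cast hr1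
  have hq2r : q ≤ 2 * (r:ℝ) := by
    have := Nat.le_ceil (q / 2)
    rw [← hrdef] at this
    linarith
  have h2r2 : 2 * (r:ℝ) - 2 < q := by
    have := Nat.ceil_lt_add_one (by positivity : (0:ℝ) ≤ q / 2)
    rw [← hrdef] at this
    linarith
  set τ : ℝ := ∑ i, ‖φ i‖ ^ 2 with hτ
  have hτnn : 0 ≤ τ := Finset.sum_nonneg fun i _ => sq_nonneg _
  set M : ℝ := 2 ^ (Fintype.card ι) with hM
  have hMpos : (0:ℝ) < M := by positivity
  set u : (ι → Bool) → H := fun b => ∑ i, sgn (b i) • φ i with hu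
  have hcard : (Fintype.card (ι → Bool) : ℝ) = M := by
    rw [hM, Fintype.card_fun, Fintype.card_bool]
    push_cast
    ring
  -- weights
  have hw' : ∑ _b : ι → Bool, (1 / M) = 1 := by
    rw [Finset.sum_const, Finset.card_univ, nsmul_eq_mul, hcard]
    field_simp
  have hp1 : 1 ≤ 2 * (r:ℝ) / q := by
    rw [le_div_iff₀ hq0]
    linarith
  have hmean : ∑ b : ι → Bool, (1 / M) * ‖u b‖ ^ q
      ≤ (∑ b : ι → Bool, (1 / M) * (‖u b‖ ^ q) ^ (2 * (r:ℝ) / q)) ^ (1 / (2 * (r:ℝ) / q)) :=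
    Real.arith_mean_le_rpow_mean Finset.univ _ _
      (fun b _ => by positivity) hw' (fun b _ => by positivity) hp1
  have hrw : ∀ b : ι → Bool, (‖u b‖ ^ q) ^ (2 * (r:ℝ) / q) = ‖u b‖ ^ (2 * r) := by
    intro b
    rw [← Real.rpow_natCast (‖u b‖) (2 * r), ← Real.rpow_mul (norm_nonneg _)]
    congr 1
    push_cast
    field_simp
  have hsum2r : ∑ b : ι → Bool, (1 / M) * ‖u b‖ ^ (2 * r) ≤ (df r : ℝ) * τ ^ r := by
    have h1 : ∑ b : ι → Bool, ‖u b‖ ^ (2 * r) ≤ M * (df r : ℝ) * τ ^ r := by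
      have h2 := (hilbert_to_scalar φ r).trans
        (khintchine_scalar (fun i => ‖φ i‖) Finset.univ r)
      simpa [hu, hM, hτ] using h2
    rw [← Finset.mul_sum]
    calc (1 / M) * ∑ b : ι → Bool, ‖u b‖ ^ (2 * r)
        ≤ (1 / M) * (M * (df r : ℝ) * τ ^ r) := by
          apply mul_le_mul_of_nonneg_left h1 (by positivity)
      _ = (df r : ℝ) * τ ^ r := by field_simp
  have hqr0 : 0 ≤ 1 / (2 * (r:ℝ) / q) := by positivity
  have hqT : 0 ≤ q * τ := by positivity
  have hfin : ∑ b : ι → Bool, (1 / M) * ‖u b‖ ^ q ≤ (q * τ) ^ (q / 2) := by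
    calc ∑ b : ι → Bool, (1 / M) * ‖u b‖ ^ q
        ≤ (∑ b : ι → Bool, (1 / M) * (‖u b‖ ^ q) ^ (2 * (r:ℝ) / q)) ^ (1 / (2 * (r:ℝ) / q)) := hmean
      _ = (∑ b : ι → Bool, (1 / M) * ‖u b‖ ^ (2 * r)) ^ (1 / (2 * (r:ℝ) / q)) := by
          rw [Finset.sum_congr rfl fun b _ => by rw [hrw b]]
      _ ≤ ((df r : ℝ) * τ ^ r) ^ (1 / (2 * (r:ℝ) / q)) := by
          apply Real.rpow_le_rpow _ hsum2r hqr0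
          exact Finset.sum_nonneg fun b _ => by positivity
      _ ≤ (q ^ r * τ ^ r) ^ (1 / (2 * (r:ℝ) / q)) := by
          apply Real.rpow_le_rpow (by positivity) _ hqr0
          apply mul_le_mul_of_nonneg_right (df_le_rpow_base hq hr1 h2r2.le) (by positivity)
      _ = ((q * τ) ^ (r:ℕ)) ^ (1 / (2 * (r:ℝ) / q)) := by rw [mul_pow]
      _ = (q * τ) ^ ((r:ℝ) * (1 / (2 * (r:ℝ) / q))) := by
          rw [← Real.rpow_natCast (q * τ) r, ← Real.rpow_mul hqT]
      _ = (q * τ) ^ (q / 2) := by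
          congr 1
          have hrne : (r:ℝ) ≠ 0 := by linarith
          field_simp
  calc ∑ b : ι → Bool, ‖u b‖ ^ q = M * ∑ b : ι → Bool, (1 / M) * ‖u b‖ ^ q := by
        rw [← Finset.mul_sum]
        field_simp
    _ ≤ M * (q * τ) ^ (q / 2) := mul_le_mul_of_nonneg_left hfin hMpos.le

lemma marginal {T : ℕ} (t : Fin T) {β : Type*} [Fintype β] [DecidableEq β] (F : β → ℝ) :
    ∑ σ : Fin T → β, F (σ t) = (Fintype.card β : ℝ) ^ (T - 1) * ∑ b : β, F b := by
  classical
  have h1 : ∑ σ : Fin T → β, F (σ t) = ∑ p : β × ({j : Fin T // j ≠ t} → β), F p.1 := by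
    rw [← Equiv.sum_comp (Equiv.funSplitAt t β) (fun p => F p.1)]
    simp only [Equiv.funSplitAt_apply]
  rw [h1, Fintype.sum_prod_type]
  have h2 : ∀ x : β, ∑ _p : ({j : Fin T // j ≠ t} → β), F x
      = (Fintype.card β : ℝ) ^ (T - 1) * F x := by
    intro x
    rw [Finset.sum_const, Finset.card_univ, nsmul_eq_mul]
    congr 1
    rw [Fintype.card_fun]
    push_cast
    congr 1
    rw [Fintype.card_subtype_compl, Fintype.card_subtype_eq, Fintype.card_fin]
  rw [Finset.sum_congr rfl fun x _ => h2 x, ← Finset.mul_sum]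


/-- For `s > 1`, with `s* = s/(s-1)`,
`R̂(F_s) ≤ (2/(TN)) √( R s* (Σ_t (tr K_t)^{s*/2})^{2/s*} )`, where `tr K_t = Σ_i ‖φ_t^i‖²`. -/
theorem erc_Fs_trace_bound {H : Type*} [NormedAddCommGroup H] [InnerProductSpace ℝ H]
    (T N : ℕ) (hT : 0 < T) (hN : 0 < N) (R : ℝ) (hR : 0 < R)
    (φ : Fin T → Fin N → H) (s : ℝ) (hs : 1 < s) :
    ERC T N φ (Fs H T s R) ≤
      (2 / ((T : ℝ) * N)) *
        Real.sqrt (R * (s / (s - 1)) *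
          (∑ t, (∑ i, ‖φ t i‖ ^ 2) ^ ((s / (s - 1)) / 2)) ^ (2 / (s / (s - 1)))) := by
  classical
  set q : ℝ := s / (s - 1) with hqdef
  have hs1 : 0 < s - 1 := by linarith
  have hq : 1 < q := by rw [hqdef, lt_div_iff₀ hs1]; linarith
  have hq0 : 0 < q := by linarith
  have hc0 : (0:ℝ) ≤ 2 / ((T : ℝ) * N) := by positivity
  set A : (Fin T → Fin N → Bool) → Fin T → ℝ :=
    fun σ t => ‖∑ i, sgn (σ t i) • φ t i‖ with hA
  set X : ℝ := ∑ t, (∑ i, ‖φ t i‖ ^ 2) ^ (q / 2) with hX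
  have hτnn : ∀ t : Fin T, (0:ℝ) ≤ ∑ i, ‖φ t i‖ ^ 2 :=
    fun t => Finset.sum_nonneg fun i _ => sq_nonneg _
  have hXnn : 0 ≤ X := Finset.sum_nonneg fun t _ => Real.rpow_nonneg (hτnn t) _
  have hconj : Real.HolderConjugate s q :=
    (Real.holderConjugate_iff_eq_conjExponent hs).mpr hqdef
  have hzq : ∀ σ : Fin T → Fin N → Bool, (0:ℝ) ≤ ∑ t, A σ t ^ q :=
    fun σ => Finset.sum_nonneg fun t _ => Real.rpow_nonneg (norm_nonneg _) _
  -- Step 1: pointwise bound on the supremum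
  have hsup : ∀ σ : Fin T → Fin N → Bool,
      sSup {v : ℝ | ∃ w ∈ Fs H T s R,
          v = (2 / ((T : ℝ) * N)) * ∑ t, ∑ i, sgn (σ t i) * ⟪w t, φ t i⟫}
        ≤ (2 / ((T : ℝ) * N)) * (Real.sqrt R * (∑ t, A σ t ^ q) ^ (1/q)) := by
    intro σ
    have hB : (0:ℝ) ≤ (2 / ((T : ℝ) * N)) * (Real.sqrt R * (∑ t, A σ t ^ q) ^ (1/q)) := by
      have h0 : (0:ℝ) ≤ (∑ t, A σ t ^ q) ^ (1/q) := Real.rpow_nonneg (hzq σ) _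
      exact mul_nonneg hc0 (mul_nonneg (Real.sqrt_nonneg _) h0)
    apply Real.sSup_le _ hB
    rintro v ⟨w, hw, rfl⟩
    obtain ⟨lam, hlam0, hlams, hwb⟩ := hw
    apply mul_le_mul_of_nonneg_left _ hc0
    have hwt : ∀ t, ‖w t‖ ≤ lam t * Real.sqrt R := by
      intro t
      have h3 : Real.sqrt (‖w t‖ ^ 2) ≤ Real.sqrt (lam t ^ 2 * R) := Real.sqrt_le_sqrt (hwb t)
      rwa [Real.sqrt_sq (norm_nonneg _),
        show lam t ^ 2 * R = (lam t * Real.sqrt R) ^ 2 by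
          rw [mul_pow, Real.sq_sqrt hR.le],
        Real.sqrt_sq (mul_nonneg (hlam0 t) (Real.sqrt_nonneg R))] at h3
    have hstep1 : ∀ t : Fin T,
        ∑ i, sgn (σ t i) * ⟪w t, φ t i⟫ ≤ (lam t * Real.sqrt R) * A σ t := by
      intro t
      have hi : ∑ i, sgn (σ t i) * ⟪w t, φ t i⟫ = ⟪w t, ∑ i, sgn (σ t i) • φ t i⟫ := by
        rw [inner_sum]
        exact Finset.sum_congr rfl fun i _ => (real_inner_smul_right _ _ _).symm
      rw [hi]
      calc ⟪w t, ∑ i, sgn (σ t i) • φ t i⟫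
          ≤ ‖w t‖ * ‖∑ i, sgn (σ t i) • φ t i‖ := real_inner_le_norm _ _
        _ ≤ (lam t * Real.sqrt R) * A σ t :=
            mul_le_mul_of_nonneg_right (hwt t) (norm_nonneg _)
    calc ∑ t, ∑ i, sgn (σ t i) * ⟪w t, φ t i⟫
        ≤ ∑ t, (lam t * Real.sqrt R) * A σ t := Finset.sum_le_sum fun t _ => hstep1 t
      _ = Real.sqrt R * ∑ t, lam t * A σ t := by
          rw [Finset.mul_sum]; exact Finset.sum_congr rfl fun t _ => by ring
      _ ≤ Real.sqrt R * ((∑ t, A σ t ^ q) ^ (1/q)) := by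
          apply mul_le_mul_of_nonneg_left _ (Real.sqrt_nonneg R)
          have hh := Real.inner_le_Lp_mul_Lq (Finset.univ) lam (fun t => A σ t) hconj
          rw [Finset.sum_congr rfl fun t (_ : t ∈ Finset.univ) =>
              (by rw [abs_of_nonneg (hlam0 t)] : |lam t| ^ s = lam t ^ s),
            Finset.sum_congr rfl fun t (_ : t ∈ Finset.univ) =>
              (by rw [abs_of_nonneg (norm_nonneg _)] : |A σ t| ^ q = A σ t ^ q)] at hh
          have hl1 : (∑ t, lam t ^ s) ^ (1/s) ≤ 1 :=
            Real.rpow_le_one (Finset.sum_nonneg fun t _ => Real.rpow_nonneg (hlam0 t) _)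
              hlams (by positivity)
          calc ∑ t, lam t * A σ t
              ≤ (∑ t, lam t ^ s) ^ (1/s) * (∑ t, A σ t ^ q) ^ (1/q) := hh
            _ ≤ 1 * (∑ t, A σ t ^ q) ^ (1/q) :=
                mul_le_mul_of_nonneg_right hl1 (Real.rpow_nonneg (hzq σ) _)
            _ = (∑ t, A σ t ^ q) ^ (1/q) := one_mul _
  -- Step 2: the expectation bound
  set M₀ : ℝ := ((2:ℝ) ^ N) ^ T with hM₀
  have hM₀pos : (0:ℝ) < M₀ := by positivity
  have hM0 : (Fintype.card (Fin T → Fin N → Bool) : ℝ) = M₀ := by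
    rw [Fintype.card_fun, Fintype.card_fun, Fintype.card_bool, Fintype.card_fin, Fintype.card_fin]
    push_cast; ring
  have hmomt : ∀ t : Fin T, ∑ σ : Fin T → Fin N → Bool, A σ t ^ q
      ≤ M₀ * (q * ∑ i, ‖φ t i‖ ^ 2) ^ (q / 2) := by
    intro t
    have hm := marginal t (fun b : Fin N → Bool => ‖∑ i, sgn (b i) • φ t i‖ ^ q)
    have : ∑ σ : Fin T → Fin N → Bool, A σ t ^ q
        = (Fintype.card (Fin N → Bool) : ℝ) ^ (T - 1)
          * ∑ b : Fin N → Bool, ‖∑ i, sgn (b i) • φ t i‖ ^ q := hm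
    rw [this]
    have hcard2 : (Fintype.card (Fin N → Bool) : ℝ) = (2:ℝ) ^ N := by
      rw [Fintype.card_fun, Fintype.card_bool, Fintype.card_fin]; push_cast; ring
    rw [hcard2]
    have hmb := moment_bound (fun i : Fin N => φ t i) hq
    have hfin : (2:ℝ) ^ (Fintype.card (Fin N)) = (2:ℝ) ^ N := by rw [Fintype.card_fin]
    rw [hfin] at hmb
    calc ((2:ℝ) ^ N) ^ (T - 1) * ∑ b : Fin N → Bool, ‖∑ i, sgn (b i) • φ t i‖ ^ q
        ≤ ((2:ℝ) ^ N) ^ (T - 1) * ((2:ℝ) ^ N * (q * ∑ i, ‖φ t i‖ ^ 2) ^ (q / 2)) :=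
          mul_le_mul_of_nonneg_left hmb (by positivity)
      _ = M₀ * (q * ∑ i, ‖φ t i‖ ^ 2) ^ (q / 2) := by
          rw [hM₀, ← mul_assoc, ← pow_succ]
          congr 2
          omega
  have hEz : (∑ σ : Fin T → Fin N → Bool, (∑ t, A σ t ^ q) ^ (1/q)) / M₀
      ≤ q ^ ((1:ℝ)/2) * X ^ (1/q) := by
    have hw' : ∑ _σ : Fin T → Fin N → Bool, (1 / M₀) = 1 := by
      rw [Finset.sum_const, Finset.card_univ, nsmul_eq_mul, hM0]
      field_simp
    have hmean := Real.arith_mean_le_rpow_mean Finset.univ (fun _ => 1 / M₀)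
      (fun σ => (∑ t, A σ t ^ q) ^ (1/q)) (fun σ _ => by positivity) hw'
      (fun σ _ => Real.rpow_nonneg (hzq σ) _) hq.le
    have hzpow : ∀ σ : Fin T → Fin N → Bool,
        ((∑ t, A σ t ^ q) ^ (1/q)) ^ q = ∑ t, A σ t ^ q := by
      intro σ
      rw [← Real.rpow_mul (hzq σ), one_div, inv_mul_cancel₀ hq0.ne', Real.rpow_one]
    have hsum_le : ∑ σ : Fin T → Fin N → Bool, (1 / M₀) * (∑ t, A σ t ^ q)
        ≤ q ^ (q/2) * X := by
      calc ∑ σ : Fin T → Fin N → Bool, (1 / M₀) * (∑ t, A σ t ^ q)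
          = (1 / M₀) * ∑ t, ∑ σ : Fin T → Fin N → Bool, A σ t ^ q := by
            rw [← Finset.mul_sum, Finset.sum_comm]
        _ ≤ (1 / M₀) * ∑ t, M₀ * (q * ∑ i, ‖φ t i‖ ^ 2) ^ (q / 2) := by
            apply mul_le_mul_of_nonneg_left _ (by positivity)
            exact Finset.sum_le_sum fun t _ => hmomt t
        _ = ∑ t, (q * ∑ i, ‖φ t i‖ ^ 2) ^ (q / 2) := by
            rw [← Finset.mul_sum, ← mul_assoc]
            field_simp
        _ = q ^ (q/2) * X := by
            rw [hX, Finset.mul_sum]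
            exact Finset.sum_congr rfl fun t _ => Real.mul_rpow hq0.le (hτnn t)
    calc (∑ σ : Fin T → Fin N → Bool, (∑ t, A σ t ^ q) ^ (1/q)) / M₀
        = ∑ σ : Fin T → Fin N → Bool, (1 / M₀) * ((∑ t, A σ t ^ q) ^ (1/q)) := by
          rw [← Finset.mul_sum]; ring
      _ ≤ (∑ σ : Fin T → Fin N → Bool, (1 / M₀) * ((∑ t, A σ t ^ q) ^ (1/q)) ^ q) ^ (1/q) := hmean
      _ = (∑ σ : Fin T → Fin N → Bool, (1 / M₀) * (∑ t, A σ t ^ q)) ^ (1/q) := by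
          rw [Finset.sum_congr rfl fun σ _ => by rw [hzpow σ]]
      _ ≤ (q ^ (q/2) * X) ^ (1/q) := by
          apply Real.rpow_le_rpow _ hsum_le (by positivity)
          exact Finset.sum_nonneg fun σ _ => by
            have := hzq σ
            positivity
      _ = q ^ ((1:ℝ)/2) * X ^ (1/q) := by
          rw [Real.mul_rpow (by positivity) hXnn, ← Real.rpow_mul hq0.le]
          congr 2
          field_simp
  -- Step 3: conclusion
  have hfinal : ERC T N φ (Fs H T s R)
      ≤ (2 / ((T : ℝ) * N)) * (Real.sqrt R * (q ^ ((1:ℝ)/2) * X ^ (1/q))) := by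
    rw [ERC, Eσ, hM0]
    calc (∑ σ : Fin T → Fin N → Bool, sSup {v : ℝ | ∃ w ∈ Fs H T s R,
            v = (2 / ((T : ℝ) * N)) * ∑ t, ∑ i, sgn (σ t i) * ⟪w t, φ t i⟫}) / M₀
        ≤ (∑ σ : Fin T → Fin N → Bool,
            (2 / ((T : ℝ) * N)) * (Real.sqrt R * (∑ t, A σ t ^ q) ^ (1/q))) / M₀ := by
          gcongr
          exact hsup _
      _ = (2 / ((T : ℝ) * N)) * Real.sqrt R
            * ((∑ σ : Fin T → Fin N → Bool, (∑ t, A σ t ^ q) ^ (1/q)) / M₀) := by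
          have hcongr : ∀ σ' ∈ (Finset.univ : Finset (Fin T → Fin N → Bool)),
              (2 / ((T:ℝ)*N)) * (Real.sqrt R * (∑ t, A σ' t ^ q) ^ (1/q))
                = (2 / ((T:ℝ)*N) * Real.sqrt R) * ((∑ t, A σ' t ^ q) ^ (1/q)) :=
            fun _ _ => by ring
          rw [Finset.sum_congr rfl hcongr, ← Finset.mul_sum, mul_div_assoc]
      _ ≤ (2 / ((T : ℝ) * N)) * Real.sqrt R * (q ^ ((1:ℝ)/2) * X ^ (1/q)) := by
          apply mul_le_mul_of_nonneg_left hEz (by positivity)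
      _ = (2 / ((T : ℝ) * N)) * (Real.sqrt R * (q ^ ((1:ℝ)/2) * X ^ (1/q))) := by ring
  have hr : Real.sqrt (R * q * X ^ (2/q))
      = Real.sqrt R * (q ^ ((1:ℝ)/2) * X ^ (1/q)) := by
    rw [Real.sqrt_mul (by positivity) (X ^ (2/q)), Real.sqrt_mul hR.le q]
    have h1 : Real.sqrt q = q ^ ((1:ℝ)/2) := Real.sqrt_eq_rpow q
    have h2 : Real.sqrt (X ^ (2/q)) = X ^ (1/q) := by
      have hx2 : X ^ (2/q) = (X ^ (1/q)) ^ (2:ℕ) := by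
        rw [← Real.rpow_natCast (X ^ (1/q)) 2, ← Real.rpow_mul hXnn]
        congr 1
        push_cast
        field_simp
      rw [hx2, Real.sqrt_sq (Real.rpow_nonneg hXnn _)]
    rw [h1, h2]
    ring
  calc ERC T N φ (Fs H T s R)
      ≤ (2 / ((T : ℝ) * N)) * (Real.sqrt R * (q ^ ((1:ℝ)/2) * X ^ (1/q))) := hfinal
    _ = (2 / ((T : ℝ) * N)) * Real.sqrt (R * q * X ^ (2/q)) := by rw [hr]

end
end

section
/- Suppose ‖φ_t^i‖ ≤ 1 for all t = 1,…,T and i = 1,…,N. Then for every s > 1 (so that s* = s/(s−1) is finite), R̂(F_s) ≤ (2/(T√N)) · √( R · T^{2/s*} · s* ). -/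
open scoped BigOperators
open RealInnerProductSpace

noncomputable section

lemma lemA (m : ℕ) : ∀ j : ℕ, (2*m).choose (2*j) ≤ m.choose j * (2*m-1)^j := by
  intro j
  induction j with
  | zero => simp
  | succ j ih =>
    rcases le_or_gt (2*(j+1)) (2*m) with h | h
    · have hjm : j < m := by omega
      have i1 : (2*m).choose (2*j+1) * (2*j+1) = (2*m).choose (2*j) * (2*m - 2*j) :=
        Nat.choose_succ_right_eq (2*m) (2*j)
      have i2 : (2*m).choose (2*j+2) * (2*j+2) = (2*m).choose (2*j+1) * (2*m - (2*j+1)) :=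
        Nat.choose_succ_right_eq (2*m) (2*j+1)
      have i3 : m.choose (j+1) * (j+1) = m.choose j * (m - j) :=
        Nat.choose_succ_right_eq m j
      have key : (2*m).choose (2*(j+1)) * ((2*j+1)*(2*j+2)) ≤
          (m.choose (j+1) * (2*m-1)^(j+1)) * ((2*j+1)*(2*j+2)) := by
        have e1 : (2*m).choose (2*(j+1)) * ((2*j+1)*(2*j+2)) =
            (2*m).choose (2*j) * ((2*m - 2*j) * (2*m - (2*j+1))) := by
          have : 2*(j+1) = 2*j+2 := by ring
          rw [this]
          calc (2*m).choose (2*j+2) * ((2*j+1)*(2*j+2))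
              = ((2*m).choose (2*j+2) * (2*j+2)) * (2*j+1) := by ring
            _ = ((2*m).choose (2*j+1) * (2*m - (2*j+1))) * (2*j+1) := by rw [i2]
            _ = ((2*m).choose (2*j+1) * (2*j+1)) * (2*m - (2*j+1)) := by ring
            _ = ((2*m).choose (2*j) * (2*m - 2*j)) * (2*m - (2*j+1)) := by rw [i1]
            _ = _ := by ring
        rw [e1]
        have e2 : (m.choose (j+1) * (2*m-1)^(j+1)) * ((2*j+1)*(2*j+2)) =
            (m.choose j * (m-j)) * ((2*m-1)^(j+1) * ((2*j+1) * 2)) := by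
          calc (m.choose (j+1) * (2*m-1)^(j+1)) * ((2*j+1)*(2*j+2))
              = (m.choose (j+1) * (j+1)) * ((2*m-1)^(j+1) * ((2*j+1) * 2)) := by ring
            _ = _ := by rw [i3]
        rw [e2]
        have hsub : 2*m - 2*j = 2*(m-j) := by omega
        have hsub2 : (2*m - (2*j+1)) ≤ (2*m-1)*(2*j+1) := by
          have h1 : 2*m - (2*j+1) ≤ 2*m-1 := by omega
          calc 2*m - (2*j+1) ≤ 2*m-1 := h1
            _ ≤ (2*m-1)*(2*j+1) := Nat.le_mul_of_pos_right _ (by omega)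
        calc (2*m).choose (2*j) * ((2*m - 2*j) * (2*m - (2*j+1)))
            ≤ (m.choose j * (2*m-1)^j) * ((2*m - 2*j) * (2*m - (2*j+1))) := by
              exact Nat.mul_le_mul_right _ ih
          _ = (m.choose j * (m-j)) * ((2*m-1)^j * (2 * (2*m - (2*j+1)))) := by
              rw [hsub]; ring
          _ ≤ (m.choose j * (m-j)) * ((2*m-1)^j * (2 * ((2*m-1)*(2*j+1)))) := by
              exact Nat.mul_le_mul_left _ (Nat.mul_le_mul_left _ (Nat.mul_le_mul_left _ hsub2))
          _ = (m.choose j * (m-j)) * ((2*m-1)^(j+1) * ((2*j+1) * 2)) := by ring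
      exact Nat.le_of_mul_le_mul_right key (by positivity)
    · rw [Nat.choose_eq_zero_of_lt h]
      exact Nat.zero_le _

lemma lemA' (m j : ℕ) (hj : j ≤ m) : (2*m).choose (2*j) ≤ m.choose j * (2*m-1)^(m-j) := by
  have h1 : 2*j ≤ 2*m := by omega
  have : (2*m).choose (2*j) = (2*m).choose (2*m - 2*j) := (Nat.choose_symm h1).symm
  rw [this]
  have h2 : 2*m - 2*j = 2*(m-j) := by omega
  rw [h2]
  calc (2*m).choose (2*(m-j)) ≤ m.choose (m-j) * (2*m-1)^(m-j) := lemA m (m-j)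
    _ = m.choose j * (2*m-1)^(m-j) := by rw [Nat.choose_symm hj]

lemma lemB (m : ℕ) (a c : ℝ) (ha : 0 ≤ a) (hc : 0 ≤ c) :
    (a+c)^(2*m) + (a-c)^(2*m) ≤ 2 * (a^2 + ((2*m-1 : ℕ) : ℝ) * c^2)^m := by
  have h1 : (a+c)^(2*m) = ∑ k ∈ Finset.range (2*m+1),
      a^k * c^(2*m-k) * ((2*m).choose k : ℝ) := add_pow a c (2*m)
  have h2 : (a-c)^(2*m) = ∑ k ∈ Finset.range (2*m+1),
      a^k * (-c)^(2*m-k) * ((2*m).choose k : ℝ) := by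
    rw [sub_eq_add_neg]; exact add_pow a (-c) (2*m)
  rw [h1, h2, ← Finset.sum_add_distrib]
  set g : ℕ → ℝ := fun k => a^k * c^(2*m-k) * ((2*m).choose k : ℝ)
      + a^k * (-c)^(2*m-k) * ((2*m).choose k : ℝ) with hg
  have himg : (Finset.range (m+1)).image (fun j => 2*j) ⊆ Finset.range (2*m+1) := by
    intro k hk
    simp only [Finset.mem_image, Finset.mem_range] at hk ⊢
    obtain ⟨j, hj, rfl⟩ := hk; omega
  have hvanish : ∀ k ∈ Finset.range (2*m+1),
      k ∉ (Finset.range (m+1)).image (fun j => 2*j) → g k = 0 := by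
    intro k hk hkn
    have hodd : Odd k := by
      rcases Nat.even_or_odd k with he | ho
      · exfalso
        obtain ⟨r, hr⟩ := he
        apply hkn
        simp only [Finset.mem_image, Finset.mem_range]
        simp only [Finset.mem_range] at hk
        exact ⟨r, by omega, by omega⟩
      · exact ho
    have hodd2 : Odd (2*m - k) := by
      simp only [Finset.mem_range] at hk
      obtain ⟨r, hr⟩ := hodd
      exact ⟨m - r - 1, by omega⟩
    simp only [hg, hodd2.neg_pow]
    ring
  have hsum : ∑ k ∈ Finset.range (2*m+1), g k
      = ∑ j ∈ Finset.range (m+1), g (2*j) := by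
    rw [← Finset.sum_subset himg hvanish]
    rw [Finset.sum_image]
    intro x _ y _ h; simp only at h; omega
  rw [hsum]
  have hrhs : 2 * (a^2 + ((2*m-1 : ℕ) : ℝ) * c^2)^m
      = ∑ j ∈ Finset.range (m+1),
        2 * ((a^2)^j * (((2*m-1:ℕ):ℝ) * c^2)^(m-j) * (m.choose j : ℝ)) := by
    rw [add_pow, Finset.mul_sum]
  rw [hrhs]
  apply Finset.sum_le_sum
  intro j hj
  simp only [Finset.mem_range] at hj
  have hjm : j ≤ m := by omega
  have heq : g (2*j) = 2 * (a^(2*j) * c^(2*(m-j)) * (((2*m).choose (2*j) : ℕ) : ℝ)) := by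
    have he : 2*m - 2*j = 2*(m-j) := by omega
    have : Even (2*(m-j)) := ⟨m-j, by ring⟩
    simp only [hg, he, this.neg_pow]
    ring
  rw [heq]
  have hcast : (((2*m).choose (2*j) : ℕ) : ℝ) ≤ (m.choose j : ℝ) * ((2*m-1:ℕ):ℝ)^(m-j) := by
    have := lemA' m j hjm
    calc (((2*m).choose (2*j) : ℕ) : ℝ) ≤ ((m.choose j * (2*m-1)^(m-j) : ℕ) : ℝ) := by
          exact_mod_cast this
      _ = (m.choose j : ℝ) * ((2*m-1:ℕ):ℝ)^(m-j) := by push_cast; ring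
  have hterm : a^(2*j) * c^(2*(m-j)) ≥ 0 := by positivity
  calc 2 * (a^(2*j) * c^(2*(m-j)) * (((2*m).choose (2*j) : ℕ) : ℝ))
      ≤ 2 * (a^(2*j) * c^(2*(m-j)) * ((m.choose j : ℝ) * ((2*m-1:ℕ):ℝ)^(m-j))) := by
        apply mul_le_mul_of_nonneg_left _ (by norm_num)
        exact mul_le_mul_of_nonneg_left hcast hterm
    _ = 2 * ((a^2)^j * (((2*m-1:ℕ):ℝ) * c^2)^(m-j) * (m.choose j : ℝ)) := by
        rw [mul_pow, ← pow_mul, ← pow_mul]; ring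

lemma lemMono (m : ℕ) (A b β : ℝ) (hb : 0 ≤ b) (hbβ : b ≤ β) (hβA : β ≤ A) :
    ((A+b)^m + (A-b)^m ≤ (A+β)^m + (A-β)^m) ∧
    (0 ≤ (A+b)^m - (A-b)^m) ∧
    ((A+b)^m - (A-b)^m ≤ (A+β)^m - (A-β)^m) := by
  induction m with
  | zero => norm_num
  | succ m ih =>
    obtain ⟨ih1, ih2, ih3⟩ := ih
    have hA : 0 ≤ A := le_trans (le_trans hb hbβ) hβA
    have h1 : 0 ≤ A - b := by linarith
    have h2 : 0 ≤ A - β := by linarith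
    have g1 : (0:ℝ) ≤ (A+b)^m := pow_nonneg (by linarith) m
    have g2 : (0:ℝ) ≤ (A-b)^m := pow_nonneg (by linarith) m
    have h1' : (0:ℝ) ≤ (A+β)^m := pow_nonneg (by linarith) m
    have h2' : (0:ℝ) ≤ (A-β)^m := pow_nonneg (by linarith) m
    have e1 : (A+b)^(m+1) + (A-b)^(m+1)
        = A*((A+b)^m + (A-b)^m) + b*((A+b)^m - (A-b)^m) := by ring
    have e2 : (A+β)^(m+1) + (A-β)^(m+1)
        = A*((A+β)^m + (A-β)^m) + β*((A+β)^m - (A-β)^m) := by ring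
    have e3 : (A+b)^(m+1) - (A-b)^(m+1)
        = A*((A+b)^m - (A-b)^m) + b*((A+b)^m + (A-b)^m) := by ring
    have e4 : (A+β)^(m+1) - (A-β)^(m+1)
        = A*((A+β)^m - (A-β)^m) + β*((A+β)^m + (A-β)^m) := by ring
    have k1 : b*((A+b)^m - (A-b)^m) ≤ β*((A+β)^m - (A-β)^m) :=
      mul_le_mul hbβ ih3 ih2 (le_trans hb hbβ)
    have k2 : b*((A+b)^m + (A-b)^m) ≤ β*((A+β)^m + (A-β)^m) :=
      mul_le_mul hbβ ih1 (by linarith) (le_trans hb hbβ)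
    refine ⟨?_, ?_, ?_⟩
    · rw [e1, e2]
      have := mul_le_mul_of_nonneg_left ih1 hA
      linarith
    · rw [e3]
      have := mul_nonneg hA ih2
      have := mul_nonneg hb (by linarith : (0:ℝ) ≤ (A+b)^m + (A-b)^m)
      linarith
    · rw [e3, e4]
      have := mul_le_mul_of_nonneg_left ih3 hA
      linarith

lemma lemC {H : Type*} [NormedAddCommGroup H] [InnerProductSpace ℝ H]
    (m : ℕ) (x y : H) :
    ‖x+y‖^(2*m) + ‖x-y‖^(2*m) ≤ 2 * (‖x‖^2 + ((2*m-1 : ℕ) : ℝ) * ‖y‖^2)^m := by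
  set A : ℝ := ‖x‖^2 + ‖y‖^2 with hA
  set b : ℝ := 2 * ⟪x,y⟫ with hb
  have hxy : ‖x+y‖^2 = A + b := by
    rw [hA, hb, @norm_add_sq_real]; ring
  have hxy' : ‖x-y‖^2 = A - b := by
    rw [hA, hb, @norm_sub_sq_real]; ring
  have e1 : ‖x+y‖^(2*m) = (A+b)^m := by rw [pow_mul, hxy]
  have e2 : ‖x-y‖^(2*m) = (A-b)^m := by rw [pow_mul, hxy']
  rw [e1, e2]
  set β : ℝ := 2 * (‖x‖ * ‖y‖) with hβ
  have hβA : β ≤ A := by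
    have := sq_nonneg (‖x‖ - ‖y‖)
    simp only [hβ, hA]; nlinarith
  have habs : |b| ≤ β := by
    rw [hb, hβ, abs_mul, abs_two]
    have := abs_real_inner_le_norm x y
    nlinarith [abs_nonneg (⟪x,y⟫ : ℝ)]
  have hstep : (A+b)^m + (A-b)^m ≤ (A+β)^m + (A-β)^m := by
    rcases abs_cases b with ⟨h1, h2⟩ | ⟨h1, h2⟩
    · exact (lemMono m A b β (by linarith) (by rw [← h1]; exact habs) hβA).1
    · have := (lemMono m A (-b) β (by linarith) (by rw [← h1]; exact habs) hβA).1
      calc (A+b)^m + (A-b)^m = (A+(-b))^m + (A-(-b))^m := by ring_nf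
        _ ≤ (A+β)^m + (A-β)^m := by rw [add_comm ((A+(-b))^m)] at this ⊢; linarith
  apply le_trans hstep
  have e3 : A + β = (‖x‖ + ‖y‖)^2 := by rw [hA, hβ]; ring
  have e4 : A - β = (‖x‖ - ‖y‖)^2 := by rw [hA, hβ]; ring
  have e5 : (A+β)^m + (A-β)^m = (‖x‖+‖y‖)^(2*m) + (‖x‖-‖y‖)^(2*m) := by
    rw [e3, e4, pow_mul, pow_mul]
  rw [e5]
  exact lemB m ‖x‖ ‖y‖ (norm_nonneg x) (norm_nonneg y)

lemma lemD {H : Type*} [NormedAddCommGroup H] [InnerProductSpace ℝ H] :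
    ∀ (n : ℕ) (φ : Fin n → H), (∀ i, ‖φ i‖ ≤ 1) → ∀ (m : ℕ),
    ∑ v : Fin n → Bool, ‖∑ i, sgn (v i) • φ i‖^(2*m)
      ≤ 2^n * (((2*m-1 : ℕ) : ℝ) * n)^m := by
  intro n
  induction n with
  | zero =>
    intro φ hφ m
    have h1 : ∀ v : Fin 0 → Bool, ‖∑ i, sgn (v i) • φ i‖^(2*m) = (0:ℝ)^(2*m) := by
      intro v; simp
    rw [Finset.sum_congr rfl (fun v _ => h1 v)]
    simp only [Finset.sum_const, Finset.card_univ, Nat.cast_zero, mul_zero, pow_zero, one_mul]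
    rcases Nat.eq_zero_or_pos m with hm | hm
    · subst hm; simp
    · rw [zero_pow (by omega), zero_pow (by omega)]
      simp
  | succ n ih =>
    intro φ hφ m
    set κ : ℝ := ((2*m-1 : ℕ) : ℝ) with hκ
    have hκ0 : 0 ≤ κ := Nat.cast_nonneg _
    set F : (Fin (n+1) → Bool) → ℝ := fun v => ‖∑ i, sgn (v i) • φ i‖^(2*m) with hF
    set e := Fin.consEquiv (fun _ : Fin (n+1) => Bool) with he
    have hsum : ∑ v, F v = ∑ p : Bool × (Fin n → Bool), F (e p) :=
      (Equiv.sum_comp e F).symm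
    rw [hsum, Fintype.sum_prod_type, Finset.sum_comm]
    -- inner: for fixed w, sum over b
    set x : (Fin n → Bool) → H := fun w => ∑ i, sgn (w i) • φ i.succ with hx
    have key : ∀ w : Fin n → Bool,
        ∑ b : Bool, F (e (b, w)) ≤ 2 * (‖x w‖^2 + κ)^m := by
      intro w
      have hev : ∀ b w', (e (b, w') : Fin (n+1) → Bool) = Fin.cons b w' := fun _ _ => rfl
      have hvec : ∀ b, ∑ i : Fin (n+1), sgn ((Fin.cons b w : Fin (n+1) → Bool) i) • φ i
          = sgn b • φ 0 + x w := by
        intro b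
        rw [Fin.sum_univ_succ]
        simp [hx]
      have hsb : ∑ b : Bool, F (e (b, w))
          = ‖x w + φ 0‖^(2*m) + ‖x w - φ 0‖^(2*m) := by
        rw [Fintype.sum_bool]
        simp only [hF, hev, hvec]
        have ht : sgn true • φ 0 + x w = x w + φ 0 := by
          simp [sgn, add_comm]
        have hf : sgn false • φ 0 + x w = x w - φ 0 := by
          simp [sgn, sub_eq_add_neg, add_comm]
        rw [ht, hf]
      rw [hsb]
      calc ‖x w + φ 0‖^(2*m) + ‖x w - φ 0‖^(2*m)
          ≤ 2 * (‖x w‖^2 + κ * ‖φ 0‖^2)^m := lemC m (x w) (φ 0)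
        _ ≤ 2 * (‖x w‖^2 + κ)^m := by
            apply mul_le_mul_of_nonneg_left _ (by norm_num)
            apply pow_le_pow_left₀ (by positivity)
            have h1 : ‖φ 0‖^2 ≤ 1 := by
              have := hφ 0
              nlinarith [norm_nonneg (φ 0)]
            nlinarith
    have hIH : ∀ k, k ≤ m → ∑ w : Fin n → Bool, ‖x w‖^(2*k) ≤ 2^n * (κ * n)^k := by
      intro k hk
      calc ∑ w : Fin n → Bool, ‖x w‖^(2*k)
          ≤ 2^n * (((2*k-1 : ℕ) : ℝ) * n)^k :=
            ih (fun i => φ i.succ) (fun i => hφ i.succ) k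
        _ ≤ 2^n * (κ * n)^k := by
            apply mul_le_mul_of_nonneg_left _ (by positivity)
            apply pow_le_pow_left₀ (by positivity)
            apply mul_le_mul_of_nonneg_right _ (Nat.cast_nonneg n)
            exact_mod_cast Nat.cast_le.mpr (by omega : 2*k-1 ≤ 2*m-1)
    have hexpand : ∑ w : Fin n → Bool, (‖x w‖^2 + κ)^m
        = ∑ k ∈ Finset.range (m+1),
            (∑ w : Fin n → Bool, ‖x w‖^(2*k)) * (κ^(m-k) * (m.choose k : ℝ)) := by
      calc ∑ w : Fin n → Bool, (‖x w‖^2 + κ)^m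
          = ∑ w : Fin n → Bool, ∑ k ∈ Finset.range (m+1),
              ‖x w‖^(2*k) * (κ^(m-k) * (m.choose k : ℝ)) := by
            apply Finset.sum_congr rfl
            intro w _
            rw [add_pow]
            apply Finset.sum_congr rfl
            intro k _
            rw [pow_mul]
            ring
        _ = ∑ k ∈ Finset.range (m+1), ∑ w : Fin n → Bool,
              ‖x w‖^(2*k) * (κ^(m-k) * (m.choose k : ℝ)) := Finset.sum_comm
        _ = _ := by
            apply Finset.sum_congr rfl
            intro k _
            rw [Finset.sum_mul]
    calc ∑ w : Fin n → Bool, ∑ b : Bool, F (e (b, w))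
        ≤ ∑ w : Fin n → Bool, 2 * (‖x w‖^2 + κ)^m :=
          Finset.sum_le_sum (fun w _ => key w)
      _ = 2 * ∑ w : Fin n → Bool, (‖x w‖^2 + κ)^m := by rw [Finset.mul_sum]
      _ ≤ 2 * ∑ k ∈ Finset.range (m+1),
            (2^n * (κ * n)^k) * (κ^(m-k) * (m.choose k : ℝ)) := by
          apply mul_le_mul_of_nonneg_left _ (by norm_num)
          rw [hexpand]
          apply Finset.sum_le_sum
          intro k hk
          apply mul_le_mul_of_nonneg_right _ (by positivity)
          exact hIH k (by simp only [Finset.mem_range] at hk; omega)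
      _ = 2^(n+1) * ∑ k ∈ Finset.range (m+1),
            (κ * n)^k * κ^(m-k) * (m.choose k : ℝ) := by
          rw [Finset.mul_sum, Finset.mul_sum]
          apply Finset.sum_congr rfl
          intro k _
          ring
      _ = 2^(n+1) * (κ * n + κ)^m := by rw [← add_pow]
      _ = 2^(n+1) * (κ * (n+1 : ℕ))^m := by
          congr 2
          push_cast
          ring

lemma expBounds : Real.exp (-(1/2) : ℝ) < 0.6066 ∧ Real.exp 1 < 2.7182819 := by
  have he1 : Real.exp 1 < 2.7182818286 := Real.exp_one_lt_d9
  have he2 : 2.7182818283 < Real.exp 1 := Real.exp_one_gt_d9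
  constructor
  · have hy : Real.exp (1/2 : ℝ) * Real.exp (1/2 : ℝ) = Real.exp 1 := by
      rw [← Real.exp_add]; norm_num
    have hypos : 0 < Real.exp (1/2 : ℝ) := Real.exp_pos _
    have hy2 : 1.6487 < Real.exp (1/2 : ℝ) := by nlinarith
    have h3 : Real.exp (-(1/2) : ℝ) = (Real.exp (1/2 : ℝ))⁻¹ := by
      rw [← Real.exp_neg]
    rw [h3, inv_lt_comm₀ hypos (by norm_num)]
    nlinarith
  · linarith

lemma lemKey (m : ℕ) (hm : 2 ≤ m) (q : ℝ) (h1 : 2*(m:ℝ)-2 < q) (h2 : q ≤ 2*(m:ℝ)) :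
    ((m:ℝ) - q/2) * ((2*(m:ℝ)-3)/q)^(m-1) + (q/2 - (m:ℝ) + 1) * ((2*(m:ℝ)-1)/q)^m ≤ 1 := by
  have hmR : (2:ℝ) ≤ (m:ℝ) := by exact_mod_cast hm
  have hq0 : 0 < q := by linarith
  set μ : ℝ := q/2 - (m:ℝ) + 1 with hμdef
  clear_value μ
  have hμ0 : 0 < μ := by rw [hμdef]; linarith
  have hμ1 : μ ≤ 1 := by rw [hμdef]; linarith
  have hlam : (m:ℝ) - q/2 = 1 - μ := by rw [hμdef]; ring
  rw [hlam]
  have hlam0 : 0 ≤ 1 - μ := by linarith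
  set r₁ : ℝ := (2*(m:ℝ)-3)/q with hr₁
  clear_value r₁
  set r₂ : ℝ := (2*(m:ℝ)-1)/q with hr₂
  clear_value r₂
  have hr₁0 : 0 ≤ r₁ := by rw [hr₁]; apply div_nonneg _ hq0.le; linarith
  have hr₂0 : 0 ≤ r₂ := by rw [hr₂]; apply div_nonneg _ hq0.le; linarith
  have hr₁1 : r₁ ≤ 1 := by rw [hr₁, div_le_one hq0]; linarith
  rcases le_or_gt (1/2 : ℝ) μ with hc | hc
  · have hr₂1 : r₂ ≤ 1 := by
      rw [hr₂, div_le_one hq0]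
      rw [hμdef] at hc; linarith
    calc (1-μ) * r₁^(m-1) + μ * r₂^m
        ≤ (1-μ) * 1 + μ * 1 := by
          apply add_le_add
          · exact mul_le_mul_of_nonneg_left (pow_le_one₀ hr₁0 hr₁1) hlam0
          · exact mul_le_mul_of_nonneg_left (pow_le_one₀ hr₂0 hr₂1) hμ0.le
      _ = 1 := by ring
  · obtain ⟨hE, he⟩ := expBounds
    have hE0 : 0 < Real.exp (-(1/2) : ℝ) := Real.exp_pos _
    have ha1 : r₁^(m-1) ≤ Real.exp (-(1/2) : ℝ) := by
      have hb1 : r₁ ≤ (2*(m:ℝ)-3)/(2*(m:ℝ)-2) := by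
        rw [hr₁]
        apply div_le_div_of_nonneg_left (by linarith) (by linarith) (by linarith)
      have hb2 : (2*(m:ℝ)-3)/(2*(m:ℝ)-2) ≤ Real.exp (-(1/(2*(m:ℝ)-2))) := by
        have h := Real.add_one_le_exp (-(1/(2*(m:ℝ)-2)))
        have hne : 2*(m:ℝ)-2 ≠ 0 := by linarith
        have hd : (2*(m:ℝ)-3)/(2*(m:ℝ)-2) = -(1/(2*(m:ℝ)-2)) + 1 := by
          rw [div_eq_iff hne, add_mul, neg_mul, one_div, inv_mul_cancel₀ hne]
          ring
        rw [hd]; exact h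
      have hb3 : r₁^(m-1) ≤ (Real.exp (-(1/(2*(m:ℝ)-2))))^(m-1) :=
        pow_le_pow_left₀ hr₁0 (le_trans hb1 hb2) (m-1)
      have hb4 : (Real.exp (-(1/(2*(m:ℝ)-2))))^(m-1)
          = Real.exp (((m-1:ℕ):ℝ) * (-(1/(2*(m:ℝ)-2)))) := (Real.exp_nat_mul _ (m-1)).symm
      have hc1 : ((m-1:ℕ):ℝ) = (m:ℝ) - 1 := by
        have h1' : (1:ℕ) ≤ m := by omega
        push_cast [Nat.cast_sub h1']; ring
      have hb5 : ((m:ℝ) - 1) * (-(1/(2*(m:ℝ)-2))) = -(1/2) := by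
        have : 2*(m:ℝ)-2 ≠ 0 := by linarith
        rw [mul_neg, mul_one_div, neg_inj, div_eq_iff this]
        ring
      rw [hb4, hc1, hb5] at hb3
      exact hb3
    have ha2 : r₂^m ≤ Real.exp 1 / (1 + 2*μ) := by
      have hx : r₂ = 1 + (1-2*μ)/q := by
        rw [hr₂, hμdef]; field_simp; ring
      have hxb : r₂ ≤ Real.exp ((1-2*μ)/q) := by
        rw [hx]
        have h := Real.add_one_le_exp ((1-2*μ)/q)
        linarith
      have hb3 : r₂^m ≤ (Real.exp ((1-2*μ)/q))^m := pow_le_pow_left₀ hr₂0 hxb m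
      have hb4 : (Real.exp ((1-2*μ)/q))^m = Real.exp ((m:ℝ) * ((1-2*μ)/q)) :=
        (Real.exp_nat_mul _ m).symm
      have hb5 : (m:ℝ) * ((1-2*μ)/q) ≤ 1 - 2*μ := by
        have h2μ : 0 ≤ 1 - 2*μ := by linarith
        have hmq : (m:ℝ) ≤ q := by linarith
        rw [← mul_div_assoc, div_le_iff₀ hq0]
        nlinarith [mul_le_mul_of_nonneg_right hmq h2μ]
      have hb6 : Real.exp ((m:ℝ) * ((1-2*μ)/q)) ≤ Real.exp (1 - 2*μ) :=
        Real.exp_le_exp.mpr hb5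
      have hb7 : Real.exp (1 - 2*μ) ≤ Real.exp 1 / (1 + 2*μ) := by
        have hsplit : Real.exp (1 - 2*μ) = Real.exp 1 * Real.exp (-(2*μ)) := by
          rw [← Real.exp_add]; ring_nf
        have hgt : 1 + 2*μ ≤ Real.exp (2*μ) := by
          have h := Real.add_one_le_exp (2*μ)
          linarith
        have hinv : Real.exp (-(2*μ)) ≤ 1/(1 + 2*μ) := by
          rw [Real.exp_neg, one_div]
          exact inv_anti₀ (by linarith) hgt
        rw [hsplit, div_eq_mul_inv, ← one_div]
        exact mul_le_mul_of_nonneg_left hinv (Real.exp_pos 1).le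
      exact le_trans hb3 (le_trans (le_of_eq hb4) (le_trans hb6 hb7))
    -- final numeric quadratic
    have hfinal : (1-μ) * Real.exp (-(1/2):ℝ) + μ * (Real.exp 1 / (1+2*μ)) ≤ 1 := by
      have h2μpos : (0:ℝ) < 1 + 2*μ := by linarith
      set E := Real.exp (-(1/2):ℝ) with hEdef
      have key : (1-μ)*E*(1+2*μ) + μ*Real.exp 1 ≤ 1+2*μ := by
        have hprod : (0:ℝ) ≤ (1-μ)*(1+2*μ) := mul_nonneg hlam0 (by linarith)
        have hEb := mul_le_mul_of_nonneg_left hE.le hprod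
        nlinarith [sq_nonneg (μ - 0.5461), hEb, he, hμ0.le, hc.le]
      have hrw : (1-μ) * E + μ * (Real.exp 1 / (1+2*μ))
          = ((1-μ)*E*(1+2*μ) + μ*Real.exp 1) / (1+2*μ) := by
        field_simp
      rw [hrw, div_le_one h2μpos]
      exact key
    calc (1-μ) * r₁^(m-1) + μ * r₂^m
        ≤ (1-μ) * Real.exp (-(1/2):ℝ) + μ * (Real.exp 1 / (1+2*μ)) := by
          apply add_le_add
          · exact mul_le_mul_of_nonneg_left ha1 hlam0
          · exact mul_le_mul_of_nonneg_left ha2 hμ0.le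
      _ ≤ 1 := hfinal

lemma lemE {H : Type*} [NormedAddCommGroup H] [InnerProductSpace ℝ H]
    (N : ℕ) (hN : 0 < N) (q : ℝ) (hq : 1 ≤ q) (ψ : Fin N → H) (hψ : ∀ i, ‖ψ i‖ ≤ 1) :
    ∑ v : Fin N → Bool, ‖∑ i, sgn (v i) • ψ i‖ ^ q ≤ 2^N * (q * N) ^ (q/2) := by
  set X : (Fin N → Bool) → ℝ := fun v => ‖∑ i, sgn (v i) • ψ i‖ with hX
  have hX0 : ∀ v, 0 ≤ X v := fun v => norm_nonneg _
  have hq0 : 0 < q := by linarith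
  have hNR : (0:ℝ) < (N:ℝ) := by exact_mod_cast hN
  have hqN : (0:ℝ) < q * N := by positivity
  have hcard : (Fintype.card (Fin N → Bool) : ℝ) = 2^N := by
    rw [Fintype.card_fun]
    simp
  have hDk : ∀ k : ℕ, ∑ v : Fin N → Bool, (X v)^(2*k) ≤ 2^N * (((2*k-1 : ℕ) : ℝ) * N)^k :=
    fun k => lemD N ψ hψ k
  rcases le_or_gt q 2 with hq2 | hq2
  · -- easy case via Jensen
    have hw : ∑ _v : Fin N → Bool, ((2:ℝ)^N)⁻¹ = 1 := by
      rw [Finset.sum_const, Finset.card_univ, nsmul_eq_mul, hcard]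
      field_simp
    have hp1 : (1:ℝ) ≤ 2/q := by
      rw [le_div_iff₀ hq0]; linarith
    have jensen := Real.arith_mean_le_rpow_mean Finset.univ (fun _ => ((2:ℝ)^N)⁻¹)
      (fun v => (X v)^q) (fun i _ => by positivity) hw
      (fun i _ => Real.rpow_nonneg (hX0 i) q) hp1
    have hconv : ∀ v, ((X v)^q)^((2:ℝ)/q) = (X v)^(2:ℕ) := by
      intro v
      rw [← Real.rpow_natCast (X v) 2, ← Real.rpow_mul (hX0 v)]
      congr 1
      field_simp
      norm_num
    have hinv : (1:ℝ)/((2:ℝ)/q) = q/2 := by field_simp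
    rw [hinv] at jensen
    simp only [hconv] at jensen
    -- jensen : ∑ w * X^q ≤ (∑ w * X^2)^(q/2)
    have hsum2 : ∑ v : Fin N → Bool, ((2:ℝ)^N)⁻¹ * (X v)^(2:ℕ) ≤ (N:ℝ) := by
      rw [← Finset.mul_sum]
      have h2 := hDk 1
      have h2' : ∑ v : Fin N → Bool, (X v)^(2:ℕ) ≤ 2^N * (N:ℝ) := by
        calc ∑ v : Fin N → Bool, (X v)^(2:ℕ)
            = ∑ v : Fin N → Bool, (X v)^(2*1) := by norm_num
          _ ≤ 2^N * (((2*1-1 : ℕ) : ℝ) * N)^1 := hDk 1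
          _ = 2^N * (N:ℝ) := by norm_num
      calc ((2:ℝ)^N)⁻¹ * ∑ v : Fin N → Bool, (X v)^(2:ℕ)
          ≤ ((2:ℝ)^N)⁻¹ * (2^N * (N:ℝ)) := by
            apply mul_le_mul_of_nonneg_left h2' (by positivity)
        _ = (N:ℝ) := by field_simp
    have hmono : (∑ v : Fin N → Bool, ((2:ℝ)^N)⁻¹ * (X v)^(2:ℕ))^((q:ℝ)/2) ≤ ((q:ℝ)*N)^(q/2) := by
      apply Real.rpow_le_rpow _ _ (by positivity)
      · apply Finset.sum_nonneg; intro v _; positivity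
      · calc ∑ v : Fin N → Bool, ((2:ℝ)^N)⁻¹ * (X v)^(2:ℕ) ≤ (N:ℝ) := hsum2
          _ ≤ q*N := by nlinarith
    have hfin : ∑ v : Fin N → Bool, ((2:ℝ)^N)⁻¹ * (X v)^q ≤ (q*N)^(q/2) :=
      le_trans jensen hmono
    rw [← Finset.mul_sum] at hfin
    calc ∑ v : Fin N → Bool, (X v)^q
        = 2^N * (((2:ℝ)^N)⁻¹ * ∑ v : Fin N → Bool, (X v)^q) := by
          field_simp
      _ ≤ 2^N * (q*N)^(q/2) := by
          apply mul_le_mul_of_nonneg_left hfin (by positivity)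
  · -- hard case
    set m : ℕ := ⌈q/2⌉₊ with hm
    have hmge : q/2 ≤ (m:ℝ) := Nat.le_ceil _
    have hmlt : (m:ℝ) < q/2 + 1 := Nat.ceil_lt_add_one (by positivity)
    have hm2 : 2 ≤ m := by
      have h1 : (1:ℝ) < (m:ℝ) := by linarith
      have h2 : 1 < m := by exact_mod_cast h1
      omega
    have hmR : (2:ℝ) ≤ (m:ℝ) := by exact_mod_cast hm2
    have hk1 : 2*(m:ℝ)-2 < q := by linarith
    have hk2 : q ≤ 2*(m:ℝ) := by linarith
    set lam : ℝ := (m:ℝ) - q/2 with hlam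
    set mu : ℝ := q/2 - (m:ℝ) + 1 with hmu
    have hlam0 : 0 ≤ lam := by rw [hlam]; linarith
    have hmu0 : 0 ≤ mu := by rw [hmu]; linarith
    have hlm : lam + mu = 1 := by rw [hlam, hmu]; ring
    set ζ : (Fin N → Bool) → ℝ := fun v => (X v)^(2:ℕ)/(q*N) with hζ
    have hζ0 : ∀ v, 0 ≤ ζ v := fun v => by positivity
    have hpoint : ∀ v, (X v)^q ≤ (q*(N:ℝ))^(q/2) * (lam * (ζ v)^(m-1) + mu * (ζ v)^m) := by
      intro v
      have hXsq : (X v)^(2:ℕ) = (q*N) * ζ v := by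
        rw [hζ]
        field_simp
      have hXq : (X v)^q = ((q*N) * ζ v)^(q/2 : ℝ) := by
        rw [← hXsq, ← Real.rpow_natCast (X v) 2, ← Real.rpow_mul (hX0 v)]
        congr 1
        push_cast
        field_simp
      have hsplit : ((q*N) * ζ v)^(q/2 : ℝ) = (q*N)^(q/2 : ℝ) * (ζ v)^(q/2 : ℝ) :=
        Real.mul_rpow hqN.le (hζ0 v)
      have hgeom : (ζ v)^(q/2 : ℝ) = ((ζ v)^(m-1:ℕ))^(lam:ℝ) * ((ζ v)^(m:ℕ))^(mu:ℝ) := by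
        rw [← Real.rpow_natCast (ζ v) (m-1), ← Real.rpow_natCast (ζ v) m,
          ← Real.rpow_mul (hζ0 v), ← Real.rpow_mul (hζ0 v),
          ← Real.rpow_add' (hζ0 v) (by rw [hlam, hmu]; intro hcon; nlinarith)]
        congr 1
        have hc1 : ((m-1:ℕ):ℝ) = (m:ℝ)-1 := by
          have h1 : (1:ℕ) ≤ m := by omega
          push_cast [Nat.cast_sub h1]
          ring
        rw [hc1, hlam, hmu]
        ring
      have hgam := Real.geom_mean_le_arith_mean2_weighted hlam0 hmu0
        (pow_nonneg (hζ0 v) (m-1)) (pow_nonneg (hζ0 v) m) hlm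
      calc (X v)^q = (q*N)^(q/2 : ℝ) * (ζ v)^(q/2 : ℝ) := by rw [hXq, hsplit]
        _ ≤ (q*(N:ℝ))^(q/2) * (lam * (ζ v)^(m-1) + mu * (ζ v)^m) := by
            apply mul_le_mul_of_nonneg_left _ (Real.rpow_nonneg hqN.le _)
            rw [hgeom]
            exact hgam
    -- sum the pointwise bound
    have hsummed : ∑ v : Fin N → Bool, (X v)^q
        ≤ (q*(N:ℝ))^(q/2) * (lam * (∑ v : Fin N → Bool, (ζ v)^(m-1))
            + mu * (∑ v : Fin N → Bool, (ζ v)^m)) := by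
      calc ∑ v : Fin N → Bool, (X v)^q
          ≤ ∑ v : Fin N → Bool, (q*(N:ℝ))^(q/2) * (lam * (ζ v)^(m-1) + mu * (ζ v)^m) :=
            Finset.sum_le_sum (fun v _ => hpoint v)
        _ = (q*(N:ℝ))^(q/2) * (lam * (∑ v : Fin N → Bool, (ζ v)^(m-1))
              + mu * (∑ v : Fin N → Bool, (ζ v)^m)) := by
            rw [← Finset.mul_sum, Finset.sum_add_distrib, ← Finset.mul_sum, ← Finset.mul_sum]
    -- bound the two zeta sums
    have hζsum : ∀ k : ℕ, k ≤ m → 1 ≤ k →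
        ∑ v : Fin N → Bool, (ζ v)^k ≤ 2^N * ((2*(k:ℝ)-1)/q)^k := by
      intro k hk h1k
      have hcast : (((2*k-1 : ℕ) : ℝ)) = 2*(k:ℝ)-1 := by
        have : (1:ℕ) ≤ 2*k := by omega
        push_cast [Nat.cast_sub this]
        ring
      have hζk : ∀ v, (ζ v)^k = (X v)^(2*k) / (q*N)^k := by
        intro v
        rw [hζ, div_pow, ← pow_mul]
      rw [Finset.sum_congr rfl (fun v _ => hζk v), ← Finset.sum_div]
      rw [div_le_iff₀ (by positivity)]
      calc ∑ v : Fin N → Bool, (X v)^(2*k)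
          ≤ 2^N * (((2*k-1 : ℕ) : ℝ) * N)^k := hDk k
        _ = 2^N * ((2*(k:ℝ)-1)/q)^k * (q*N)^k := by
            rw [hcast, mul_assoc, ← mul_pow]
            congr 2
            field_simp
    have hz1 : ∑ v : Fin N → Bool, (ζ v)^(m-1) ≤ 2^N * ((2*((m-1:ℕ):ℝ)-1)/q)^(m-1) :=
      hζsum (m-1) (by omega) (by omega)
    have hz2 : ∑ v : Fin N → Bool, (ζ v)^m ≤ 2^N * ((2*(m:ℝ)-1)/q)^m :=
      hζsum m le_rfl (by omega)
    have hc1 : ((m-1:ℕ):ℝ) = (m:ℝ)-1 := by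
      have h1 : (1:ℕ) ≤ m := by omega
      push_cast [Nat.cast_sub h1]
      ring
    rw [hc1] at hz1
    have hz1' : ∑ v : Fin N → Bool, (ζ v)^(m-1) ≤ 2^N * ((2*(m:ℝ)-3)/q)^(m-1) := by
      calc ∑ v : Fin N → Bool, (ζ v)^(m-1) ≤ 2^N * ((2*((m:ℝ)-1)-1)/q)^(m-1) := hz1
        _ = 2^N * ((2*(m:ℝ)-3)/q)^(m-1) := by ring_nf
    have hkey := lemKey m hm2 q hk1 hk2
    calc ∑ v : Fin N → Bool, (X v)^q
        ≤ (q*(N:ℝ))^(q/2) * (lam * (∑ v : Fin N → Bool, (ζ v)^(m-1))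
            + mu * (∑ v : Fin N → Bool, (ζ v)^m)) := hsummed
      _ ≤ (q*(N:ℝ))^(q/2) * (lam * (2^N * ((2*(m:ℝ)-3)/q)^(m-1))
            + mu * (2^N * ((2*(m:ℝ)-1)/q)^m)) := by
          apply mul_le_mul_of_nonneg_left _ (Real.rpow_nonneg hqN.le _)
          apply add_le_add
          · exact mul_le_mul_of_nonneg_left hz1' hlam0
          · exact mul_le_mul_of_nonneg_left hz2 hmu0
      _ = (q*(N:ℝ))^(q/2) * (2^N * (lam * ((2*(m:ℝ)-3)/q)^(m-1)
            + mu * ((2*(m:ℝ)-1)/q)^m)) := by ring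
      _ ≤ (q*(N:ℝ))^(q/2) * (2^N * 1) := by
          apply mul_le_mul_of_nonneg_left _ (Real.rpow_nonneg hqN.le _)
          apply mul_le_mul_of_nonneg_left _ (by positivity)
          rw [hlam, hmu]
          exact hkey
      _ = 2^N * (q*(N:ℝ))^(q/2) := by ring

lemma sum_eval (T N : ℕ) (t : Fin T) (G : (Fin N → Bool) → ℝ) :
    (∑ σ : Fin T → Fin N → Bool, G (σ t)) / (Fintype.card (Fin T → Fin N → Bool) : ℝ)
      = (∑ v : Fin N → Bool, G v) / 2^N := by
  classical
  set e := Equiv.funSplitAt t (Fin N → Bool) with he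
  have h1 : ∑ σ : Fin T → Fin N → Bool, G (σ t)
      = ∑ p : (Fin N → Bool) × ({j : Fin T // j ≠ t} → Fin N → Bool), G p.1 := by
    rw [← Equiv.sum_comp e (fun p => G p.1)]
    exact Finset.sum_congr rfl (fun σ _ => rfl)
  set K := Fintype.card ({j : Fin T // j ≠ t} → Fin N → Bool) with hK
  have hKpos : 0 < K := Fintype.card_pos
  have h2 : ∑ p : (Fin N → Bool) × ({j : Fin T // j ≠ t} → Fin N → Bool), G p.1
      = (K:ℝ) * ∑ v : Fin N → Bool, G v := by
    rw [Fintype.sum_prod_type]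
    rw [Finset.mul_sum]
    apply Finset.sum_congr rfl
    intro v _
    have hconst : ∑ _y : ({j : Fin T // j ≠ t} → Fin N → Bool), G v = (K:ℝ) * G v := by
      rw [Finset.sum_const, Finset.card_univ, nsmul_eq_mul]
    exact hconst
  have h3 : (Fintype.card (Fin T → Fin N → Bool) : ℝ) = 2^N * K := by
    rw [Fintype.card_congr e, Fintype.card_prod]
    push_cast
    congr 1
    · rw [Fintype.card_fun]; simp
  rw [h1, h2, h3]
  have hK0 : ((K:ℝ)) ≠ 0 := by positivity
  field_simp

/-- If `‖φ_t^i‖ ≤ 1` for all `t, i`, then for `s > 1` (with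
`s* = s/(s-1)`), `R̂(F_s) ≤ (2/(T√N)) √( R · T^{2/s*} · s* )`. -/
theorem erc_Fs_bound {H : Type*} [NormedAddCommGroup H] [InnerProductSpace ℝ H]
    (T N : ℕ) (hT : 0 < T) (hN : 0 < N) (R : ℝ) (hR : 0 < R)
    (φ : Fin T → Fin N → H) (hφ : ∀ t i, ‖φ t i‖ ≤ 1)
    (s : ℝ) (hs : 1 < s) :
    ERC T N φ (Fs H T s R) ≤
      (2 / ((T : ℝ) * Real.sqrt N)) *
        Real.sqrt (R * (T : ℝ) ^ (2 / (s / (s - 1))) * (s / (s - 1))) := by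
  classical
  set q : ℝ := s / (s-1) with hqdef
  have hconj : s.HolderConjugate q := (Real.holderConjugate_iff_eq_conjExponent hs).2 hqdef
  have hq1 : 1 < q := by rw [hqdef, lt_div_iff₀ (by linarith)]; linarith
  have hq0 : 0 < q := by linarith
  have hTR : (0:ℝ) < (T:ℝ) := by exact_mod_cast hT
  have hNR : (0:ℝ) < (N:ℝ) := by exact_mod_cast hN
  have hqN : (0:ℝ) < q * N := by positivity
  set c : ℝ := 2 / ((T:ℝ) * N) with hc
  have hc0 : 0 ≤ c := by positivity
  set u : (Fin T → Fin N → Bool) → Fin T → H := fun σ t => ∑ i, sgn (σ t i) • φ t i with hu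
  set Z : (Fin T → Fin N → Bool) → ℝ := fun σ => ∑ t, ‖u σ t‖ ^ q with hZ
  have hZ0 : ∀ σ, 0 ≤ Z σ := by
    intro σ
    apply Finset.sum_nonneg
    intro t _
    exact Real.rpow_nonneg (norm_nonneg _) q
  set Xf : (Fin T → Fin N → Bool) → ℝ := fun σ => (Z σ) ^ (1/q : ℝ) with hXf
  have hXf0 : ∀ σ, 0 ≤ Xf σ := fun σ => Real.rpow_nonneg (hZ0 σ) _
  have hsqR : (0:ℝ) ≤ Real.sqrt R := Real.sqrt_nonneg R
  -- Step A : pointwise sup bound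
  have stepA : ∀ σ, sSup {v : ℝ | ∃ w ∈ Fs H T s R,
      v = c * ∑ t, ∑ i, sgn (σ t i) * ⟪w t, φ t i⟫} ≤ c * Real.sqrt R * Xf σ := by
    intro σ
    apply Real.sSup_le _ (by positivity)
    rintro x ⟨w, hwF, rfl⟩
    obtain ⟨lam, hlam0, hlams, hwb⟩ := hwF
    have hwnorm : ∀ t, ‖w t‖ ≤ lam t * Real.sqrt R := by
      intro t
      have h1 : ‖w t‖ ≤ Real.sqrt (lam t^2 * R) := by
        rw [← Real.sqrt_sq (norm_nonneg (w t))]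
        exact Real.sqrt_le_sqrt (hwb t)
      rwa [Real.sqrt_mul (sq_nonneg _), Real.sqrt_sq (hlam0 t)] at h1
    have hinner : ∀ t, ∑ i, sgn (σ t i) * ⟪w t, φ t i⟫ = ⟪w t, u σ t⟫ := by
      intro t
      rw [hu]
      rw [inner_sum]
      apply Finset.sum_congr rfl
      intro i _
      rw [real_inner_smul_right]
    have hCS : ∀ t, ⟪w t, u σ t⟫ ≤ (lam t * Real.sqrt R) * ‖u σ t‖ := by
      intro t
      calc ⟪w t, u σ t⟫ ≤ ‖w t‖ * ‖u σ t‖ := real_inner_le_norm _ _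
        _ ≤ (lam t * Real.sqrt R) * ‖u σ t‖ :=
          mul_le_mul_of_nonneg_right (hwnorm t) (norm_nonneg _)
    have hHold : ∑ t, lam t * ‖u σ t‖ ≤ Xf σ := by
      have h := Real.inner_le_Lp_mul_Lq Finset.univ lam (fun t => ‖u σ t‖) hconj
      have habs1 : ∀ t, |lam t| ^ s = lam t ^ s := fun t => by rw [abs_of_nonneg (hlam0 t)]
      have habs2 : ∀ t, |‖u σ t‖| ^ q = ‖u σ t‖ ^ q := fun t => by rw [abs_norm]
      simp only [habs1, habs2] at h
      calc ∑ t, lam t * ‖u σ t‖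
          ≤ (∑ t, lam t ^ s) ^ (1/s : ℝ) * (∑ t, ‖u σ t‖ ^ q) ^ (1/q : ℝ) := h
        _ ≤ 1 * Xf σ := by
            apply mul_le_mul_of_nonneg_right _ (hXf0 σ)
            apply Real.rpow_le_one _ hlams (by positivity)
            apply Finset.sum_nonneg
            intro t _
            exact Real.rpow_nonneg (hlam0 t) s
        _ = Xf σ := one_mul _
    calc c * ∑ t, ∑ i, sgn (σ t i) * ⟪w t, φ t i⟫
        = c * ∑ t, ⟪w t, u σ t⟫ := by
          rw [Finset.sum_congr rfl (fun t _ => hinner t)]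
      _ ≤ c * ∑ t, (lam t * Real.sqrt R) * ‖u σ t‖ := by
          apply mul_le_mul_of_nonneg_left _ hc0
          exact Finset.sum_le_sum (fun t _ => hCS t)
      _ = c * Real.sqrt R * ∑ t, lam t * ‖u σ t‖ := by
          simp only [Finset.mul_sum]
          apply Finset.sum_congr rfl
          intro t _
          ring
      _ ≤ c * Real.sqrt R * Xf σ := by
          apply mul_le_mul_of_nonneg_left hHold (by positivity)
  -- Step B: expectation of the sup
  have hMR : (0:ℝ) < (Fintype.card (Fin T → Fin N → Bool) : ℝ) := by
    exact_mod_cast (Fintype.card_pos : 0 < Fintype.card (Fin T → Fin N → Bool))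
  have stepB : ERC T N φ (Fs H T s R) ≤ c * Real.sqrt R * Eσ T N Xf := by
    unfold ERC Eσ
    rw [← hc]
    have hsum : ∑ σ : Fin T → Fin N → Bool, sSup {v : ℝ | ∃ w ∈ Fs H T s R,
        v = c * ∑ t, ∑ i, sgn (σ t i) * ⟪w t, φ t i⟫}
        ≤ ∑ σ : Fin T → Fin N → Bool, c * Real.sqrt R * Xf σ :=
      Finset.sum_le_sum (fun σ _ => stepA σ)
    calc (∑ σ : Fin T → Fin N → Bool, sSup {v : ℝ | ∃ w ∈ Fs H T s R,
          v = c * ∑ t, ∑ i, sgn (σ t i) * ⟪w t, φ t i⟫})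
          / (Fintype.card (Fin T → Fin N → Bool) : ℝ)
        ≤ (∑ σ : Fin T → Fin N → Bool, c * Real.sqrt R * Xf σ)
          / (Fintype.card (Fin T → Fin N → Bool) : ℝ) := by gcongr
      _ = c * Real.sqrt R * ((∑ σ : Fin T → Fin N → Bool, Xf σ)
          / (Fintype.card (Fin T → Fin N → Bool) : ℝ)) := by
          rw [← Finset.mul_sum, mul_div_assoc]
  -- Step D : Jensen
  have stepD : Eσ T N Xf ≤ (Eσ T N Z) ^ (1/q : ℝ) := by
    unfold Eσ
    set M : ℕ := Fintype.card (Fin T → Fin N → Bool) with hM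
    have hw : ∑ _σ : Fin T → Fin N → Bool, ((M:ℝ))⁻¹ = 1 := by
      rw [Finset.sum_const, Finset.card_univ, nsmul_eq_mul, ← hM]
      field_simp
    have h := Real.arith_mean_le_rpow_mean Finset.univ (fun _ => (M:ℝ)⁻¹) Xf
      (fun i _ => by positivity) hw (fun i _ => hXf0 i) hq1.le
    have hXq : ∀ σ, (Xf σ)^(q:ℝ) = Z σ := by
      intro σ
      rw [hXf]
      rw [← Real.rpow_mul (hZ0 σ), one_div, inv_mul_cancel₀ (ne_of_gt hq0), Real.rpow_one]
    have e1 : (∑ σ : Fin T → Fin N → Bool, Xf σ)/(M:ℝ)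
        = ∑ σ : Fin T → Fin N → Bool, (M:ℝ)⁻¹ * Xf σ := by
      rw [Finset.sum_div]
      exact Finset.sum_congr rfl (fun σ _ => div_eq_inv_mul _ _)
    have e2 : (∑ σ : Fin T → Fin N → Bool, Z σ)/(M:ℝ)
        = ∑ σ : Fin T → Fin N → Bool, (M:ℝ)⁻¹ * Z σ := by
      rw [Finset.sum_div]
      exact Finset.sum_congr rfl (fun σ _ => div_eq_inv_mul _ _)
    rw [e1, e2]
    calc ∑ σ : Fin T → Fin N → Bool, (M:ℝ)⁻¹ * Xf σ
        ≤ (∑ σ : Fin T → Fin N → Bool, (M:ℝ)⁻¹ * (Xf σ)^(q:ℝ)) ^ (1/q : ℝ) := h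
      _ = (∑ σ : Fin T → Fin N → Bool, (M:ℝ)⁻¹ * Z σ) ^ (1/q : ℝ) := by
          congr 1
          exact Finset.sum_congr rfl (fun σ _ => by rw [hXq σ])
  -- Step E : moment bound
  have stepE : Eσ T N Z ≤ (T:ℝ) * (q * N)^(q/2 : ℝ) := by
    unfold Eσ
    have hswap : ∑ σ : Fin T → Fin N → Bool, Z σ
        = ∑ t, ∑ σ : Fin T → Fin N → Bool, ‖u σ t‖ ^ q := by
      rw [hZ]
      exact Finset.sum_comm
    rw [hswap, Finset.sum_div]
    have hpert : ∀ t : Fin T, (∑ σ : Fin T → Fin N → Bool, ‖u σ t‖ ^ q)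
        / (Fintype.card (Fin T → Fin N → Bool) : ℝ) ≤ (q * N)^(q/2 : ℝ) := by
      intro t
      have hred := sum_eval T N t (fun v => ‖∑ i, sgn (v i) • φ t i‖ ^ q)
      have heq : ∑ σ : Fin T → Fin N → Bool, ‖u σ t‖ ^ q
          = ∑ σ : Fin T → Fin N → Bool, (fun v => ‖∑ i, sgn (v i) • φ t i‖ ^ q) (σ t) := rfl
      rw [heq, hred]
      rw [div_le_iff₀ (by positivity)]
      calc ∑ v : Fin N → Bool, ‖∑ i, sgn (v i) • φ t i‖ ^ q
          ≤ 2^N * (q * N)^(q/2 : ℝ) := lemE N hN q hq1.le (φ t) (hφ t)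
        _ = (q * N)^(q/2 : ℝ) * 2^N := by ring
    calc ∑ t : Fin T, (∑ σ : Fin T → Fin N → Bool, ‖u σ t‖ ^ q)
          / (Fintype.card (Fin T → Fin N → Bool) : ℝ)
        ≤ ∑ _t : Fin T, (q * N)^(q/2 : ℝ) := Finset.sum_le_sum (fun t _ => hpert t)
      _ = (T:ℝ) * (q * N)^(q/2 : ℝ) := by
          rw [Finset.sum_const, Finset.card_univ, nsmul_eq_mul, Fintype.card_fin]
  -- combine
  have hEZ0 : 0 ≤ Eσ T N Z := by
    unfold Eσ
    apply div_nonneg _ hMR.le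
    exact Finset.sum_nonneg (fun σ _ => hZ0 σ)
  have hfinal : c * Real.sqrt R * ((T:ℝ) * (q * N)^(q/2 : ℝ))^(1/q : ℝ)
      = (2 / ((T : ℝ) * Real.sqrt N)) * Real.sqrt (R * (T:ℝ)^((2:ℝ)/q) * q) := by
    have hexp1 : (q/2) * (1/q) = (1/2 : ℝ) := by
      field_simp
    have h1 : ((T:ℝ) * (q*N)^(q/2:ℝ))^(1/q:ℝ)
        = (T:ℝ)^(1/q:ℝ) * (q*N)^(1/2:ℝ) := by
      rw [Real.mul_rpow hTR.le (Real.rpow_nonneg hqN.le _), ← Real.rpow_mul hqN.le, hexp1]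
    have h2 : (q*(N:ℝ))^((1:ℝ)/2) = Real.sqrt q * Real.sqrt N := by
      rw [← Real.sqrt_eq_rpow, Real.sqrt_mul hq0.le]
    have hexp2 : ((2:ℝ)/q) * (1/2) = 1/q := by
      field_simp
    have h3 : Real.sqrt (R * (T:ℝ)^((2:ℝ)/q) * q)
        = Real.sqrt R * (T:ℝ)^(1/q:ℝ) * Real.sqrt q := by
      rw [Real.sqrt_mul (by positivity), Real.sqrt_mul hR.le]
      rw [Real.sqrt_eq_rpow ((T:ℝ)^((2:ℝ)/q)), ← Real.rpow_mul hTR.le, hexp2]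
    have hNN : Real.sqrt (N:ℝ) * Real.sqrt (N:ℝ) = (N:ℝ) := Real.mul_self_sqrt hNR.le
    have hsqN0 : (0:ℝ) < Real.sqrt N := Real.sqrt_pos.mpr hNR
    rw [h1, h2, h3, hc]
    have hT0 : (T:ℝ) ≠ 0 := ne_of_gt hTR
    have hN0 : (N:ℝ) ≠ 0 := ne_of_gt hNR
    have hsqN0' : Real.sqrt (N:ℝ) ≠ 0 := ne_of_gt hsqN0
    field_simp
    linear_combination hNN
  calc ERC T N φ (Fs H T s R)
      ≤ c * Real.sqrt R * Eσ T N Xf := stepB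
    _ ≤ c * Real.sqrt R * (Eσ T N Z) ^ (1/q : ℝ) := by
        apply mul_le_mul_of_nonneg_left stepD (by positivity)
    _ ≤ c * Real.sqrt R * ((T:ℝ) * (q * N)^(q/2 : ℝ))^(1/q : ℝ) := by
        apply mul_le_mul_of_nonneg_left _ (by positivity)
        exact Real.rpow_le_rpow hEZ0 stepE (by positivity)
    _ = (2 / ((T : ℝ) * Real.sqrt N)) * Real.sqrt (R * (T:ℝ)^((2:ℝ)/q) * q) := hfinal
    _ = (2 / ((T : ℝ) * Real.sqrt N)) * Real.sqrt (R * (T:ℝ)^(2/q) * q) := by norm_num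


end
end

section
/- Suppose T ≥ 2 and ‖φ_t^i‖ ≤ 1 for all t = 1,…,T and i = 1,…,N. Let ρ = 2 log T (natural logarithm) and ρ* = ρ/(ρ−1). Then R̂(F_{ρ*}) ≤ (2/(T√N)) · √( 2 e R log T ). -/
open scoped BigOperators
open RealInnerProductSpace

noncomputable section

namespace ErcProof

open Finset

variable {H : Type*} [NormedAddCommGroup H] [InnerProductSpace ℝ H]

lemma sinh_convexOn : ConvexOn ℝ (Set.Ici (0:ℝ)) Real.sinh := by
  apply MonotoneOn.convexOn_of_deriv (convex_Ici 0) Real.continuous_sinh.continuousOn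
    Real.differentiable_sinh.differentiableOn
  intro x hx y hy hxy
  rw [interior_Ici, Set.mem_Ioi] at hx hy
  simp only [Real.deriv_sinh]
  exact Real.cosh_le_cosh.2 (by rw [abs_of_nonneg hx.le, abs_of_nonneg hy.le]; exact hxy)

lemma sinh_div_mono {u v : ℝ} (hu : 0 < u) (huv : u ≤ v) :
    Real.sinh u / u ≤ Real.sinh v / v := by
  rcases eq_or_lt_of_le huv with rfl | h
  · exact le_rfl
  · have hv : 0 < v := lt_trans hu h
    have := sinh_convexOn.secant_mono (a := 0) (x := u) (y := v)
      (Set.self_mem_Ici) (Set.mem_Ici.2 hu.le) (Set.mem_Ici.2 hv.le) hu.ne' hv.ne' huv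
    simpa [Real.sinh_zero] using this

lemma convexOn_cosh_sqrt : ConvexOn ℝ (Set.Ici (0:ℝ)) (fun t => Real.cosh (Real.sqrt t)) := by
  have hderiv : ∀ x : ℝ, 0 < x → HasDerivAt (fun t => Real.cosh (Real.sqrt t))
      (Real.sinh (Real.sqrt x) * (1 / (2 * Real.sqrt x))) x := fun x hx =>
    (Real.hasDerivAt_sqrt (ne_of_gt hx)).cosh
  apply MonotoneOn.convexOn_of_deriv (convex_Ici 0)
  · exact (Real.continuous_cosh.comp Real.continuous_sqrt).continuousOn
  · rw [interior_Ici]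
    exact fun x hx => ((hderiv x hx).differentiableAt).differentiableWithinAt
  · rw [interior_Ici]
    intro x hx y hy hxy
    rw [Set.mem_Ioi] at hx hy
    rw [(hderiv x hx).deriv, (hderiv y hy).deriv]
    have hx' : 0 < Real.sqrt x := Real.sqrt_pos.2 hx
    have hy' : 0 < Real.sqrt y := Real.sqrt_pos.2 hy
    have h := sinh_div_mono hx' (Real.sqrt_le_sqrt hxy)
    have e1 : ∀ s A : ℝ, A * (1/(2*s)) = (A/s)/2 := by
      intro s A; rw [mul_one_div, div_div, mul_comm s 2]
    rw [e1, e1]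
    linarith

lemma twoPoint {u v w : ℝ} (h0 : 0 ≤ v) (hvw : v ≤ w) (hwu : w ≤ u) :
    Real.cosh (Real.sqrt (u+v)) + Real.cosh (Real.sqrt (u-v)) ≤
      Real.cosh (Real.sqrt (u+w)) + Real.cosh (Real.sqrt (u-w)) := by
  rcases eq_or_lt_of_le (le_trans h0 hvw) with hw0 | hw0
  · have hv0 : v = 0 := le_antisymm (hw0 ▸ hvw) h0
    rw [← hw0, hv0]
  · set C := convexOn_cosh_sqrt
    have hm1 : u - w ∈ Set.Ici (0:ℝ) := Set.mem_Ici.2 (by linarith)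
    have hm2 : u + w ∈ Set.Ici (0:ℝ) := Set.mem_Ici.2 (by linarith)
    have hθ0 : 0 ≤ (w-v)/(2*w) := div_nonneg (by linarith) (by linarith)
    have hθ1 : 0 ≤ (w+v)/(2*w) := div_nonneg (by linarith) (by linarith)
    have hsum : (w-v)/(2*w) + (w+v)/(2*w) = 1 := by field_simp; ring
    have h1 := C.2 hm1 hm2 hθ0 hθ1 hsum
    have h2 := C.2 hm2 hm1 hθ0 hθ1 (by linarith [hsum] : (w-v)/(2*w) + (w+v)/(2*w) = 1)
    simp only [smul_eq_mul] at h1 h2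
    have e1 : (w-v)/(2*w) * (u-w) + (w+v)/(2*w) * (u+w) = u + v := by field_simp; ring
    have e2 : (w-v)/(2*w) * (u+w) + (w+v)/(2*w) * (u-w) = u - v := by field_simp; ring
    rw [e1] at h1
    rw [e2] at h2
    have := add_le_add h1 h2
    calc Real.cosh (Real.sqrt (u+v)) + Real.cosh (Real.sqrt (u-v)) ≤
        ((w-v)/(2*w) * Real.cosh (Real.sqrt (u-w)) + (w+v)/(2*w) * Real.cosh (Real.sqrt (u+w))) +
        ((w-v)/(2*w) * Real.cosh (Real.sqrt (u+w)) + (w+v)/(2*w) * Real.cosh (Real.sqrt (u-w))) :=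
          this
      _ = ((w-v)/(2*w) + (w+v)/(2*w)) * (Real.cosh (Real.sqrt (u+w)) + Real.cosh (Real.sqrt (u-w))) := by
          ring
      _ = Real.cosh (Real.sqrt (u+w)) + Real.cosh (Real.sqrt (u-w)) := by rw [hsum, one_mul]


lemma coshK_aux {L : ℝ} (hL : 0 ≤ L) (a b : H) (hab : 0 ≤ ⟪a, b⟫) :
    Real.cosh (L*‖a+b‖) + Real.cosh (L*‖a-b‖) ≤
      2 * Real.cosh (L*‖a‖) * Real.cosh (L*‖b‖) := by
  have key := twoPoint (u := L^2*(‖a‖^2+‖b‖^2)) (v := L^2*(2*⟪a,b⟫)) (w := L^2*(2*(‖a‖*‖b‖)))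
    (by positivity)
    (by
      have h := real_inner_le_norm a b
      nlinarith [sq_nonneg L])
    (by nlinarith [sq_nonneg L, sq_nonneg (‖a‖ - ‖b‖)])
  have e1 : L^2*(‖a‖^2+‖b‖^2) + L^2*(2*⟪a,b⟫) = (L*‖a+b‖)^2 := by
    rw [mul_pow, @norm_add_sq_real]; ring
  have e2 : L^2*(‖a‖^2+‖b‖^2) - L^2*(2*⟪a,b⟫) = (L*‖a-b‖)^2 := by
    rw [mul_pow, @norm_sub_sq_real]; ring
  have e3 : L^2*(‖a‖^2+‖b‖^2) + L^2*(2*(‖a‖*‖b‖)) = (L*(‖a‖+‖b‖))^2 := by ring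
  have e4 : L^2*(‖a‖^2+‖b‖^2) - L^2*(2*(‖a‖*‖b‖)) = (L*(‖a‖-‖b‖))^2 := by ring
  rw [e1, e2, e3, e4, Real.sqrt_sq (by positivity), Real.sqrt_sq (by positivity),
    Real.sqrt_sq (by positivity), Real.sqrt_sq_eq_abs, Real.cosh_abs] at key
  refine le_trans key (le_of_eq ?_)
  rw [mul_add, mul_sub, Real.cosh_add, Real.cosh_sub]
  ring

lemma coshK {L : ℝ} (hL : 0 ≤ L) (a b : H) :
    Real.cosh (L*‖a+b‖) + Real.cosh (L*‖a-b‖) ≤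
      2 * Real.cosh (L*‖a‖) * Real.cosh (L*‖b‖) := by
  rcases le_or_gt 0 ⟪a, b⟫ with h | h
  · exact coshK_aux hL a b h
  · have := coshK_aux hL a (-b) (by rw [inner_neg_right]; linarith)
    simp only [← sub_eq_add_neg, sub_neg_eq_add, norm_neg] at this
    linarith


lemma coshSum : ∀ (n : ℕ) (x : Fin n → H), (∀ i, ‖x i‖ ≤ 1) → ∀ {L : ℝ}, 0 ≤ L →
    ∑ τ : Fin n → Bool, Real.cosh (L * ‖∑ i, sgn (τ i) • x i‖) ≤
      2^n * Real.exp (L^2*n/2) := by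
  intro n
  induction n with
  | zero =>
    intro x hx L hL
    rw [Fintype.sum_unique]
    simp
  | succ n ih =>
    intro x hx L hL
    rw [← Equiv.sum_comp (Fin.consEquiv (fun _ : Fin (n+1) => Bool))
      (fun τ => Real.cosh (L * ‖∑ i, sgn (τ i) • x i‖)), Fintype.sum_prod_type]
    have hrw : ∀ (b : Bool) (τ : Fin n → Bool),
        ∑ i, sgn ((Fin.consEquiv (fun _ : Fin (n+1) => Bool)) (b, τ) i) • x i
          = (∑ i : Fin n, sgn (τ i) • x (Fin.succ i)) + sgn b • x 0 := by
      intro b τ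
      rw [Fin.sum_univ_succ]
      simp [Fin.consEquiv, add_comm]
    have step : ∀ τ : Fin n → Bool,
        ∑ b : Bool, Real.cosh (L * ‖(∑ i : Fin n, sgn (τ i) • x (Fin.succ i)) + sgn b • x 0‖)
          ≤ 2 * Real.cosh (L * ‖∑ i : Fin n, sgn (τ i) • x (Fin.succ i)‖) * Real.exp (L^2/2) := by
      intro τ
      set S := ∑ i : Fin n, sgn (τ i) • x (Fin.succ i) with hS
      rw [Fintype.sum_bool]
      have h1 : S + sgn true • x 0 = S + x 0 := by simp [sgn]
      have h2 : S + sgn false • x 0 = S - x 0 := by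
        simp [sgn, sub_eq_add_neg]
      rw [h1, h2]
      have hK := coshK hL S (x 0)
      have hc : Real.cosh (L*‖x 0‖) ≤ Real.exp (L^2/2) := by
        refine le_trans ?_ (Real.cosh_le_exp_half_sq L)
        apply Real.cosh_le_cosh.2
        rw [abs_of_nonneg (by positivity), abs_of_nonneg hL]
        calc L * ‖x 0‖ ≤ L * 1 := mul_le_mul_of_nonneg_left (hx 0) hL
          _ = L := mul_one L
      calc Real.cosh (L*‖S + x 0‖) + Real.cosh (L*‖S - x 0‖)
          ≤ 2 * Real.cosh (L*‖S‖) * Real.cosh (L*‖x 0‖) := hK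
        _ ≤ 2 * Real.cosh (L*‖S‖) * Real.exp (L^2/2) := by
            apply mul_le_mul_of_nonneg_left hc
            positivity
    calc ∑ b : Bool, ∑ τ : Fin n → Bool,
          Real.cosh (L * ‖∑ i, sgn ((Fin.consEquiv (fun _ : Fin (n+1) => Bool)) (b, τ) i) • x i‖)
        = ∑ τ : Fin n → Bool, ∑ b : Bool,
            Real.cosh (L * ‖(∑ i : Fin n, sgn (τ i) • x (Fin.succ i)) + sgn b • x 0‖) := by
          rw [Finset.sum_comm]
          exact Finset.sum_congr rfl fun τ _ => Finset.sum_congr rfl fun b _ => by rw [hrw]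
      _ ≤ ∑ τ : Fin n → Bool,
            2 * Real.cosh (L * ‖∑ i : Fin n, sgn (τ i) • x (Fin.succ i)‖) * Real.exp (L^2/2) :=
          Finset.sum_le_sum fun τ _ => step τ
      _ = (2 * Real.exp (L^2/2)) *
            ∑ τ : Fin n → Bool, Real.cosh (L * ‖∑ i : Fin n, sgn (τ i) • x (Fin.succ i)‖) := by
          rw [Finset.mul_sum]
          exact Finset.sum_congr rfl fun τ _ => by ring
      _ ≤ (2 * Real.exp (L^2/2)) * (2^n * Real.exp (L^2*n/2)) := by
          apply mul_le_mul_of_nonneg_left _ (by positivity)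
          exact ih (fun i => x (Fin.succ i)) (fun i => hx _) hL
      _ = 2^(n+1) * Real.exp (L^2*(n+1:ℕ)/2) := by
          rw [show (2:ℝ) * Real.exp (L^2/2) * (2^n * Real.exp (L^2*n/2)) =
            ((2:ℝ)^n*2) * (Real.exp (L^2/2) * Real.exp (L^2*n/2)) from by ring,
            ← Real.exp_add, ← pow_succ]
          congr 1
          push_cast
          ring

lemma rpow_le_exp_aux {x p L : ℝ} (hx : 0 ≤ x) (hp : 0 < p) (hL : 0 < L) :
    x ^ p ≤ (p/(Real.exp 1 * L))^p * Real.exp (L * x) := by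
  rcases eq_or_lt_of_le hx with h0 | hx'
  · rw [← h0, Real.zero_rpow hp.ne']
    positivity
  · have hbase : 0 < p/(Real.exp 1 * L) := by positivity
    rw [Real.rpow_def_of_pos hx', Real.rpow_def_of_pos hbase, ← Real.exp_add, Real.exp_le_exp]
    have hlog := Real.log_le_sub_one_of_pos (show 0 < L*x/p by positivity)
    rw [Real.log_div (by positivity) hp.ne', Real.log_mul hL.ne' hx'.ne'] at hlog
    rw [Real.log_div hp.ne' (by positivity), Real.log_mul (Real.exp_pos 1).ne' hL.ne',
      Real.log_exp]
    have h2 := mul_le_mul_of_nonneg_left hlog hp.le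
    have h3 : p * (L * x / p - 1) = L * x - p := by field_simp
    rw [h3] at h2
    nlinarith

lemma momentSum (n : ℕ) (hn : 0 < n) (x : Fin n → H) (hx : ∀ i, ‖x i‖ ≤ 1)
    {p : ℝ} (hp : 1 ≤ p) :
    ∑ τ : Fin n → Bool, ‖∑ i, sgn (τ i) • x i‖ ^ p ≤
      2^n * (2 * Real.exp (-(p/2)) * (p*n)^(p/2)) := by
  have hp0 : 0 < p := lt_of_lt_of_le one_pos hp
  have hn0 : (0:ℝ) < n := by exact_mod_cast hn
  set L := Real.sqrt (p/n) with hLdef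
  have hL : 0 < L := Real.sqrt_pos.2 (by positivity)
  have hL2 : L^2 = p/n := Real.sq_sqrt (by positivity)
  have step : ∀ τ : Fin n → Bool, ‖∑ i, sgn (τ i) • x i‖ ^ p ≤
      (p/(Real.exp 1 * L))^p * (2 * Real.cosh (L * ‖∑ i, sgn (τ i) • x i‖)) := by
    intro τ
    refine le_trans (rpow_le_exp_aux (norm_nonneg _) hp0 hL) ?_
    apply mul_le_mul_of_nonneg_left _ (by positivity)
    rw [Real.cosh_eq]
    have := Real.exp_pos (-(L * ‖∑ i, sgn (τ i) • x i‖))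
    linarith
  calc ∑ τ : Fin n → Bool, ‖∑ i, sgn (τ i) • x i‖ ^ p
      ≤ ∑ τ : Fin n → Bool,
          (p/(Real.exp 1 * L))^p * (2 * Real.cosh (L * ‖∑ i, sgn (τ i) • x i‖)) :=
        Finset.sum_le_sum fun τ _ => step τ
    _ = ((p/(Real.exp 1 * L))^p * 2) *
          ∑ τ : Fin n → Bool, Real.cosh (L * ‖∑ i, sgn (τ i) • x i‖) := by
        rw [Finset.mul_sum]
        exact Finset.sum_congr rfl fun τ _ => by ring
    _ ≤ ((p/(Real.exp 1 * L))^p * 2) * (2^n * Real.exp (L^2*n/2)) := by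
        apply mul_le_mul_of_nonneg_left (coshSum n x hx hL.le)
        positivity
    _ = 2^n * (2 * Real.exp (-(p/2)) * (p*n)^(p/2)) := by
        have hexp : L^2*n/2 = p/2 := by
          rw [hL2]; field_simp
        have hPL : p/(Real.exp 1 * L) = Real.sqrt (p*n) * (Real.exp 1)⁻¹ := by
          have h3 : L * Real.sqrt (p*n) = p := by
            rw [hLdef, ← Real.sqrt_mul (by positivity : (0:ℝ) ≤ p/n)]
            rw [show p/n*(p*n) = p^2 from by field_simp]
            exact Real.sqrt_sq hp0.le
          rw [div_eq_iff (by positivity : Real.exp 1 * L ≠ 0)]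
          nth_rewrite 1 [← h3]
          field_simp
        have hpow : (Real.sqrt (p*n) * (Real.exp 1)⁻¹)^p
            = (p*n)^(p/2) * Real.exp (-p) := by
          rw [Real.mul_rpow (Real.sqrt_nonneg _) (by positivity)]
          congr 1
          · rw [Real.sqrt_eq_rpow, ← Real.rpow_mul (by positivity)]
            congr 1
            ring
          · rw [← Real.exp_neg, Real.rpow_def_of_pos (Real.exp_pos _), Real.log_exp]
            congr 1
            ring
        rw [hexp, hPL, hpow]
        rw [show (p*n)^(p/2) * Real.exp (-p) * 2 * (2^n * Real.exp (p/2)) =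
          2^n * (2 * (Real.exp (-p) * Real.exp (p/2)) * (p*n)^(p/2)) from by ring,
          ← Real.exp_add]
        congr 3
        ring


lemma jensenDiv {ι : Type*} [Fintype ι] (Y : ι → ℝ) (hY : ∀ σ, 0 ≤ Y σ)
    {ρ : ℝ} (hρ0 : 0 < ρ) (hρ1 : 1 < ρ) (hcard0 : 0 < (Fintype.card ι : ℝ)) :
    (∑ σ : ι, (Y σ) ^ (1/ρ)) / (Fintype.card ι : ℝ)
      ≤ ((∑ σ : ι, Y σ) / (Fintype.card ι : ℝ)) ^ (1/ρ) := by
  have h := Real.arith_mean_le_rpow_mean Finset.univ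
    (fun _ => 1/(Fintype.card ι : ℝ))
    (fun σ => (Y σ) ^ (1/ρ))
    (fun _ _ => (one_div_pos.2 hcard0).le)
    (by rw [Finset.sum_const, Finset.card_univ, nsmul_eq_mul, mul_one_div,
        div_self hcard0.ne'])
    (fun σ _ => Real.rpow_nonneg (hY σ) _) hρ1.le
  have hB : ∀ σ : ι, ((Y σ) ^ (1/ρ)) ^ ρ = Y σ := fun σ => by
    rw [← Real.rpow_mul (hY σ), one_div, inv_mul_cancel₀ hρ0.ne', Real.rpow_one]
  simp only [hB] at h
  have hA : ∀ (g : ι → ℝ),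
      ∑ σ, (1/(Fintype.card ι : ℝ)) * g σ = (∑ σ, g σ) / (Fintype.card ι : ℝ) := by
    intro g
    calc ∑ σ : ι, (1/(Fintype.card ι : ℝ)) * g σ
        = ∑ σ : ι, g σ / (Fintype.card ι : ℝ) :=
          Finset.sum_congr rfl fun σ _ => by rw [one_div, inv_mul_eq_div]
      _ = (∑ σ : ι, g σ) / (Fintype.card ι : ℝ) := (Finset.sum_div _ _ _).symm
  rw [hA, hA] at h
  exact h


end ErcProof

set_option maxHeartbeats 1000000 in
/-- If `T ≥ 2` and `‖φ_t^i‖ ≤ 1` for all `t, i`, then with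
`ρ = 2 log T` and `ρ* = ρ/(ρ-1)`, `R̂(F_{ρ*}) ≤ (2/(T√N)) √(2eR log T)`. -/
theorem erc_Fs_rhoStar_bound {H : Type*} [NormedAddCommGroup H] [InnerProductSpace ℝ H]
    (T N : ℕ) (hT : 2 ≤ T) (hN : 0 < N) (R : ℝ) (hR : 0 < R)
    (φ : Fin T → Fin N → H) (hφ : ∀ t i, ‖φ t i‖ ≤ 1)
    (ρ : ℝ) (hρ : ρ = 2 * Real.log T) :
    ERC T N φ (Fs H T (ρ / (ρ - 1)) R) ≤
      (2 / ((T : ℝ) * Real.sqrt N)) *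
        Real.sqrt (2 * Real.exp 1 * R * Real.log T) := by
  classical
  have hT' : (2:ℝ) ≤ (T:ℝ) := by exact_mod_cast hT
  have hT0 : (0:ℝ) < T := by linarith
  have hT1 : (1:ℝ) < T := by linarith
  have hN0 : (0:ℝ) < N := by exact_mod_cast hN
  have hlogT : 0 < Real.log T := Real.log_pos hT1
  have hlog2T : Real.log 2 ≤ Real.log T := Real.log_le_log two_pos hT'
  have hρ0 : 0 < ρ := by rw [hρ]; positivity
  have h2log2 : 1 < 2 * Real.log 2 := by
    have h := Real.exp_one_lt_d9
    have h2 : Real.exp (1/2) * Real.exp (1/2) = Real.exp 1 := by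
      rw [← Real.exp_add]; norm_num
    have h4 : Real.exp (1/2) < 2 := by nlinarith [Real.exp_pos (1/2)]
    have h5 : 1/2 < Real.log 2 := (Real.lt_log_iff_exp_lt two_pos).2 h4
    linarith
  have hρ1 : 1 < ρ := by
    rw [hρ]
    calc (1:ℝ) < 2 * Real.log 2 := h2log2
      _ ≤ 2 * Real.log T := by linarith
  have hconj : Real.HolderConjugate (ρ/(ρ-1)) ρ := by
    rw [Real.holderConjugate_iff]
    constructor
    · rw [lt_div_iff₀ (by linarith : (0:ℝ) < ρ - 1)]; linarith
    · rw [inv_div]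
      field_simp
      ring
  -- abbreviations (explicit)
  have hYnn : ∀ σ : Fin T → Fin N → Bool,
      0 ≤ ∑ t, ‖∑ i, sgn (σ t i) • φ t i‖ ^ ρ :=
    fun σ => Finset.sum_nonneg fun t _ => Real.rpow_nonneg (norm_nonneg _) _
  have hcard0 : 0 < (Fintype.card (Fin T → Fin N → Bool) : ℝ) := by
    exact_mod_cast Fintype.card_pos
  -- Step A: bound on the supremum for each sign pattern
  have hsup : ∀ σ : Fin T → Fin N → Bool,
      sSup {v : ℝ | ∃ w ∈ Fs H T (ρ/(ρ-1)) R,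
        v = (2 / ((T:ℝ) * N)) * ∑ t, ∑ i, sgn (σ t i) * ⟪w t, φ t i⟫}
        ≤ (2 / ((T:ℝ) * N)) * Real.sqrt R *
            (∑ t, ‖∑ i, sgn (σ t i) • φ t i‖ ^ ρ) ^ (1/ρ) := by
    intro σ
    have hb : 0 ≤ (2 / ((T:ℝ) * N)) * Real.sqrt R *
        (∑ t, ‖∑ i, sgn (σ t i) • φ t i‖ ^ ρ) ^ (1/ρ) :=
      mul_nonneg (mul_nonneg (by positivity) (Real.sqrt_nonneg R))
        (Real.rpow_nonneg (hYnn σ) _)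
    apply Real.sSup_le _ hb
    rintro v ⟨w, ⟨lam, hlam0, hlamsum, hwb⟩, rfl⟩
    have hwt : ∀ t, ‖w t‖ ≤ lam t * Real.sqrt R := by
      intro t
      rw [show ‖w t‖ = Real.sqrt (‖w t‖^2) from (Real.sqrt_sq (norm_nonneg _)).symm,
        show lam t * Real.sqrt R = Real.sqrt ((lam t)^2 * R) from by
          rw [Real.sqrt_mul (sq_nonneg _), Real.sqrt_sq (hlam0 t)]]
      exact Real.sqrt_le_sqrt (hwb t)
    have key : ∑ t, ∑ i, sgn (σ t i) * ⟪w t, φ t i⟫ ≤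
        Real.sqrt R * (∑ t, ‖∑ i, sgn (σ t i) • φ t i‖ ^ ρ) ^ (1/ρ) := by
      have hinner : ∀ t, ∑ i, sgn (σ t i) * ⟪w t, φ t i⟫ =
          ⟪w t, ∑ i, sgn (σ t i) • φ t i⟫ := by
        intro t
        rw [inner_sum]
        exact Finset.sum_congr rfl fun i _ => (real_inner_smul_right _ _ _).symm
      calc ∑ t, ∑ i, sgn (σ t i) * ⟪w t, φ t i⟫
          = ∑ t, ⟪w t, ∑ i, sgn (σ t i) • φ t i⟫ :=
            Finset.sum_congr rfl fun t _ => hinner t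
        _ ≤ ∑ t, lam t * Real.sqrt R * ‖∑ i, sgn (σ t i) • φ t i‖ :=
            Finset.sum_le_sum fun t _ => le_trans (real_inner_le_norm _ _)
              (mul_le_mul_of_nonneg_right (hwt t) (norm_nonneg _))
        _ = Real.sqrt R * ∑ t, lam t * ‖∑ i, sgn (σ t i) • φ t i‖ := by
            rw [Finset.mul_sum]
            exact Finset.sum_congr rfl fun t _ => by ring
        _ ≤ Real.sqrt R * ((∑ t, lam t ^ (ρ/(ρ-1))) ^ (1/(ρ/(ρ-1))) *
              (∑ t, ‖∑ i, sgn (σ t i) • φ t i‖ ^ ρ) ^ (1/ρ)) := by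
            apply mul_le_mul_of_nonneg_left _ (Real.sqrt_nonneg R)
            exact Real.inner_le_Lp_mul_Lq_of_nonneg Finset.univ hconj
              (fun t _ => hlam0 t) (fun t _ => norm_nonneg _)
        _ ≤ Real.sqrt R * (1 * (∑ t, ‖∑ i, sgn (σ t i) • φ t i‖ ^ ρ) ^ (1/ρ)) := by
            apply mul_le_mul_of_nonneg_left _ (Real.sqrt_nonneg R)
            apply mul_le_mul_of_nonneg_right _ (Real.rpow_nonneg (hYnn σ) _)
            exact Real.rpow_le_one
              (Finset.sum_nonneg fun t _ => Real.rpow_nonneg (hlam0 t) _) hlamsum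
              hconj.one_div_nonneg
        _ = Real.sqrt R * (∑ t, ‖∑ i, sgn (σ t i) • φ t i‖ ^ ρ) ^ (1/ρ) := by
            rw [one_mul]
    calc (2 / ((T:ℝ) * N)) * ∑ t, ∑ i, sgn (σ t i) * ⟪w t, φ t i⟫
        ≤ (2 / ((T:ℝ) * N)) * (Real.sqrt R *
            (∑ t, ‖∑ i, sgn (σ t i) • φ t i‖ ^ ρ) ^ (1/ρ)) :=
          mul_le_mul_of_nonneg_left key (by positivity)
      _ = (2 / ((T:ℝ) * N)) * Real.sqrt R *
            (∑ t, ‖∑ i, sgn (σ t i) • φ t i‖ ^ ρ) ^ (1/ρ) := by ring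
  -- Step B: marginalization and moment bound
  have hfull : ∀ t : Fin T,
      ∑ σ : Fin T → Fin N → Bool, ‖∑ i, sgn (σ t i) • φ t i‖ ^ ρ ≤
        (Fintype.card (Fin T → Fin N → Bool) : ℝ) *
          (2 * Real.exp (-(ρ/2)) * (ρ*N)^(ρ/2)) := by
    intro t
    have hsum : ∑ σ : Fin T → Fin N → Bool, ‖∑ i, sgn (σ t i) • φ t i‖ ^ ρ
        = (∑ τ : Fin N → Bool, ‖∑ i, sgn (τ i) • φ t i‖ ^ ρ) *
          (Fintype.card ({j : Fin T // j ≠ t} → (Fin N → Bool)) : ℝ) := by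
      rw [Fintype.sum_equiv (Equiv.funSplitAt t (Fin N → Bool))
        (fun σ => ‖∑ i, sgn (σ t i) • φ t i‖ ^ ρ)
        (fun p => ‖∑ i, sgn (p.1 i) • φ t i‖ ^ ρ) (fun σ => rfl),
        Fintype.sum_prod_type]
      simp only [Finset.sum_const, Finset.card_univ, nsmul_eq_mul]
      rw [← Finset.mul_sum, mul_comm]
    have hcardeq : (Fintype.card (Fin T → Fin N → Bool) : ℝ) =
        (2:ℝ)^N * (Fintype.card ({j : Fin T // j ≠ t} → (Fin N → Bool)) : ℝ) := by
      rw [Fintype.card_congr (Equiv.funSplitAt t (Fin N → Bool)), Fintype.card_prod]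
      have hb : Fintype.card (Fin N → Bool) = 2^N := by simp
      rw [hb]
      push_cast
      ring
    rw [hsum, hcardeq]
    calc (∑ τ : Fin N → Bool, ‖∑ i, sgn (τ i) • φ t i‖ ^ ρ) *
          (Fintype.card ({j : Fin T // j ≠ t} → (Fin N → Bool)) : ℝ)
        ≤ ((2:ℝ)^N * (2 * Real.exp (-(ρ/2)) * (ρ*N)^(ρ/2))) *
          (Fintype.card ({j : Fin T // j ≠ t} → (Fin N → Bool)) : ℝ) :=
          mul_le_mul_of_nonneg_right
            (ErcProof.momentSum N hN (φ t) (hφ t) hρ1.le) (by positivity)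
      _ = (2:ℝ)^N * (Fintype.card ({j : Fin T // j ≠ t} → (Fin N → Bool)) : ℝ) *
          (2 * Real.exp (-(ρ/2)) * (ρ*N)^(ρ/2)) := by ring
  have hEY : (∑ σ : Fin T → Fin N → Bool, ∑ t, ‖∑ i, sgn (σ t i) • φ t i‖ ^ ρ) /
      (Fintype.card (Fin T → Fin N → Bool) : ℝ) ≤ (2:ℝ) * (ρ*N)^(ρ/2) := by
    have hexp : Real.exp (-(ρ/2)) = (T:ℝ)⁻¹ := by
      rw [show -(ρ/2) = -(Real.log T) from by rw [hρ]; ring, Real.exp_neg,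
        Real.exp_log hT0]
    rw [div_le_iff₀ hcard0]
    calc ∑ σ : Fin T → Fin N → Bool, ∑ t, ‖∑ i, sgn (σ t i) • φ t i‖ ^ ρ
        = ∑ t, ∑ σ : Fin T → Fin N → Bool, ‖∑ i, sgn (σ t i) • φ t i‖ ^ ρ :=
          Finset.sum_comm
      _ ≤ ∑ _t : Fin T, (Fintype.card (Fin T → Fin N → Bool) : ℝ) *
            (2 * Real.exp (-(ρ/2)) * (ρ*N)^(ρ/2)) :=
          Finset.sum_le_sum fun t _ => hfull t
      _ = (T:ℝ) * ((Fintype.card (Fin T → Fin N → Bool) : ℝ) *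
            (2 * Real.exp (-(ρ/2)) * (ρ*N)^(ρ/2))) := by
          rw [Finset.sum_const, Finset.card_univ, Fintype.card_fin, nsmul_eq_mul]
      _ = (2:ℝ) * (ρ*N)^(ρ/2) * (Fintype.card (Fin T → Fin N → Bool) : ℝ) := by
          rw [hexp]
          field_simp
  -- Step C: Jensen's inequality for the concave power 1/ρ
  have jensen := ErcProof.jensenDiv
    (fun σ : Fin T → Fin N → Bool => ∑ t, ‖∑ i, sgn (σ t i) • φ t i‖ ^ ρ)
    hYnn hρ0 hρ1 hcard0
  -- Step D: assemble
  have hmain : ERC T N φ (Fs H T (ρ/(ρ-1)) R) ≤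
      (2 / ((T:ℝ) * N)) * Real.sqrt R *
        (((∑ σ : Fin T → Fin N → Bool, ∑ t, ‖∑ i, sgn (σ t i) • φ t i‖ ^ ρ) /
          (Fintype.card (Fin T → Fin N → Bool) : ℝ)) ^ (1/ρ)) := by
    have h1 : ERC T N φ (Fs H T (ρ/(ρ-1)) R) ≤
        (∑ σ : Fin T → Fin N → Bool, (2 / ((T:ℝ) * N)) * Real.sqrt R *
          (∑ t, ‖∑ i, sgn (σ t i) • φ t i‖ ^ ρ) ^ (1/ρ)) /
          (Fintype.card (Fin T → Fin N → Bool) : ℝ) := by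
      unfold ERC Eσ
      gcongr
      exact hsup _
    refine le_trans h1 ?_
    have hpull : (∑ σ : Fin T → Fin N → Bool, 2/((T:ℝ)*N) * Real.sqrt R *
          (∑ t, ‖∑ i, sgn (σ t i) • φ t i‖ ^ ρ) ^ (1/ρ)) =
        (2/((T:ℝ)*N) * Real.sqrt R) *
          ∑ σ : Fin T → Fin N → Bool,
            (∑ t, ‖∑ i, sgn (σ t i) • φ t i‖ ^ ρ) ^ (1/ρ) := by
      rw [Finset.mul_sum]
    rw [hpull, mul_div_assoc]
    exact mul_le_mul_of_nonneg_left jensen (by positivity)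
  -- Step E: final computation
  refine le_trans hmain ?_
  have hstep1 : ((∑ σ : Fin T → Fin N → Bool,
        ∑ t, ‖∑ i, sgn (σ t i) • φ t i‖ ^ ρ) /
        (Fintype.card (Fin T → Fin N → Bool) : ℝ)) ^ (1/ρ) ≤
      ((2:ℝ)*(ρ*(N:ℝ))^(ρ/2))^(1/ρ) :=
    Real.rpow_le_rpow (div_nonneg (Finset.sum_nonneg fun σ _ => hYnn σ) hcard0.le)
      hEY (one_div_pos.2 hρ0).le
  have hstep2 : ((2:ℝ)*(ρ*(N:ℝ))^(ρ/2))^(1/ρ) ≤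
      Real.exp (1/2) * Real.sqrt (ρ*(N:ℝ)) := by
    rw [Real.mul_rpow (by norm_num) (Real.rpow_nonneg (mul_nonneg hρ0.le hN0.le) _)]
    have h2a : (2:ℝ)^((1:ℝ)/ρ) ≤ Real.exp (1/2) := by
      rw [Real.rpow_def_of_pos two_pos, Real.exp_le_exp, mul_one_div,
        div_le_iff₀ hρ0, hρ]
      linarith
    have h2b : ((ρ*(N:ℝ))^(ρ/2))^((1:ℝ)/ρ) = Real.sqrt (ρ*(N:ℝ)) := by
      rw [← Real.rpow_mul (mul_nonneg hρ0.le hN0.le),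
        show (ρ/2)*((1:ℝ)/ρ) = 1/2 from by field_simp, ← Real.sqrt_eq_rpow]
    calc (2:ℝ)^((1:ℝ)/ρ) * ((ρ*(N:ℝ))^(ρ/2))^((1:ℝ)/ρ)
        ≤ Real.exp (1/2) * ((ρ*(N:ℝ))^(ρ/2))^((1:ℝ)/ρ) :=
          mul_le_mul_of_nonneg_right h2a
            (Real.rpow_nonneg (Real.rpow_nonneg (mul_nonneg hρ0.le hN0.le) _) _)
      _ = Real.exp (1/2) * Real.sqrt (ρ*(N:ℝ)) := by rw [h2b]
  have hfinal : (2/((T:ℝ)*N)) * Real.sqrt R * (Real.exp (1/2) * Real.sqrt (ρ*(N:ℝ))) =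
      2 / ((T:ℝ) * Real.sqrt N) * Real.sqrt (2*Real.exp 1*R*Real.log T) := by
    rw [Real.exp_half,
      show 2*Real.exp 1*R*Real.log (T:ℝ) = Real.exp 1 * (ρ * R) from by rw [hρ]; ring,
      Real.sqrt_mul (Real.exp_pos 1).le, Real.sqrt_mul hρ0.le R,
      Real.sqrt_mul hρ0.le (N:ℝ)]
    have hNs : Real.sqrt N * Real.sqrt N = (N:ℝ) := Real.mul_self_sqrt hN0.le
    have hsN : (0:ℝ) < Real.sqrt N := Real.sqrt_pos.2 hN0
    have e5 : (2:ℝ)/((T:ℝ)*N)*Real.sqrt N = 2/((T:ℝ)*Real.sqrt N) := by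
      field_simp
      linear_combination hNs
    calc 2/((T:ℝ)*N) * Real.sqrt R * (Real.sqrt (Real.exp 1) * (Real.sqrt ρ * Real.sqrt N))
        = ((2:ℝ)/((T:ℝ)*N)*Real.sqrt N) *
            (Real.sqrt (Real.exp 1) * (Real.sqrt ρ * Real.sqrt R)) := by ring
      _ = 2/((T:ℝ)*Real.sqrt N) *
            (Real.sqrt (Real.exp 1) * (Real.sqrt ρ * Real.sqrt R)) := by rw [e5]
  calc (2 / ((T:ℝ) * N)) * Real.sqrt R *
        (((∑ σ : Fin T → Fin N → Bool, ∑ t, ‖∑ i, sgn (σ t i) • φ t i‖ ^ ρ) /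
          (Fintype.card (Fin T → Fin N → Bool) : ℝ)) ^ (1/ρ))
      ≤ (2 / ((T:ℝ) * N)) * Real.sqrt R * (Real.exp (1/2) * Real.sqrt (ρ*(N:ℝ))) :=
        mul_le_mul_of_nonneg_left (le_trans hstep1 hstep2) (by positivity)
    _ = 2 / ((T:ℝ) * Real.sqrt N) * Real.sqrt (2*Real.exp 1*R*Real.log T) := hfinal

end
end
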